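/- arXiv:1403.3855 — 5 statements merged into one kernel-verified Lean document; each statement's English description precedes it below -/
import Mathlib

section
/- Let (V,E) be a finite digraph and Q an acyclic flow on (V,E) with div Q = μ₁ − μ₂ for probability measures μ₁, μ₂ on V. Then there exists a coupling ρ between μ₁ and μ₂ such that ρ(x,y) = 0 for every pair x ≠ y for which there is no directed path from x to y in (V,E(Q)), and moreover ∑_{x≠y} ρ(x,y) = (1/2) ∑_{x∈V} |μ₁(x) − μ₂(x)|. -/
open scoped BigOperators

variable {V : Type*}

/-- A directed path in the digraph `(V, E)`: a nonempty list of vertices whose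
consecutive pairs are directed edges. -/
def IsDipath (E : Set (V × V)) (l : List V) : Prop :=
  l ≠ [] ∧ l.Chain' (fun a b => (a, b) ∈ E)

/-- The list of directed edges of a path. -/
def pathEdges (l : List V) : List (V × V) := l.zip l.tail

/-- The unit flow `Q_γ` along a path: `1` on the edges of the path and `0` elsewhere. -/
noncomputable def pathFlow (l : List V) : V × V → ℝ :=
  Set.indicator {e | e ∈ pathEdges l} 1

/-- A flow on the digraph `(V, E)`: nonnegative and supported on `E`. -/
def IsFlow (E : Set (V × V)) (Q : V × V → ℝ) : Prop :=
  (∀ e, 0 ≤ Q e) ∧ ∀ e, e ∉ E → Q e = 0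

/-- The divergence of a flow at a vertex. -/
noncomputable def divergence (Q : V × V → ℝ) (x : V) : ℝ :=
  (∑' y, Q (x, y)) - ∑' y, Q (y, x)

/-- A relation is acyclic if it has no directed cycles. -/
def AcyclicRel (r : V → V → Prop) : Prop := ∀ x, ¬ Relation.TransGen r x x

/-- The edge relation of a digraph. -/
def edgeRel (E : Set (V × V)) : V → V → Prop := fun a b => (a, b) ∈ E

/-- The partial order induced by an acyclic digraph: `x ≤ y` iff `x = y` or there is
a directed path from `x` to `y`. -/
def inducedLE (E : Set (V × V)) : V → V → Prop :=
  Relation.ReflTransGen (edgeRel E)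

/-- A finitely decomposable flow: a pointwise sum `∑ₙ qₙ Q_{γₙ}` over finite
self-avoiding directed paths with summable nonnegative weights. -/
def FinDecomposable (E : Set (V × V)) (Q : V × V → ℝ) : Prop :=
  ∃ (γ : ℕ → List V) (q : ℕ → ℝ),
    (∀ n, IsDipath E (γ n)) ∧ (∀ n, (γ n).Nodup) ∧ (∀ n, 0 ≤ q n) ∧ Summable q ∧
    ∀ e, Q e = ∑' n, q n * pathFlow (γ n) e

/-- A probability measure on a countable set, as a nonnegative function of total sum `1`. -/
def IsProb (μ : V → ℝ) : Prop := (∀ x, 0 ≤ μ x) ∧ HasSum μ 1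

/-- A coupling of `μ₁` and `μ₂`: a probability on `V × V` with the given marginals. -/
def IsCoupling (μ₁ μ₂ : V → ℝ) (ρ : V × V → ℝ) : Prop :=
  (∀ p, 0 ≤ ρ p) ∧ (∀ x, HasSum (fun y => ρ (x, y)) (μ₁ x)) ∧
    ∀ y, HasSum (fun x => ρ (x, y)) (μ₂ y)

/-- Stochastic domination: `∑ f μ₁ ≤ ∑ f μ₂` for every bounded increasing `f`. -/
def StochDom (le : V → V → Prop) (μ₁ μ₂ : V → ℝ) : Prop :=
  ∀ f : V → ℝ, (∃ C, ∀ x, |f x| ≤ C) → (∀ x y, le x y → f x ≤ f y) →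
    ∑' x, f x * μ₁ x ≤ ∑' x, f x * μ₂ x

/-- Finite-case divergence. -/
noncomputable def divergenceF [Fintype V] (Q : V × V → ℝ) (x : V) : ℝ :=
  (∑ y, Q (x, y)) - ∑ y, Q (y, x)

/-- Probability measure on a finite set. -/
def IsProbF [Fintype V] (μ : V → ℝ) : Prop := (∀ x, 0 ≤ μ x) ∧ ∑ x, μ x = 1

/-- Coupling on a finite set. -/
def IsCouplingF [Fintype V] (μ₁ μ₂ : V → ℝ) (ρ : V × V → ℝ) : Prop :=
  (∀ p, 0 ≤ ρ p) ∧ (∀ x, ∑ y, ρ (x, y) = μ₁ x) ∧ ∀ y, ∑ x, ρ (x, y) = μ₂ y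

/-- Stochastic domination on a finite set. -/
def StochDomF [Fintype V] (le : V → V → Prop) (μ₁ μ₂ : V → ℝ) : Prop :=
  ∀ f : V → ℝ, (∀ x y, le x y → f x ≤ f y) → ∑ x, f x * μ₁ x ≤ ∑ x, f x * μ₂ x

/-- The cost of a path: the sum of the weights of its edges. -/
noncomputable def pathCost (w : V × V → ℝ) (l : List V) : ℝ := ((pathEdges l).map w).sum

/-- The geodesic cost associated to a weight function on a digraph. -/
noncomputable def geoCost (E : Set (V × V)) (w : V × V → ℝ) (x y : V) : ℝ :=
  sInf {r | ∃ l, IsDipath E l ∧ l.head? = some x ∧ l.getLast? = some y ∧ pathCost w l = r}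




theorem transport_base {V : Type*} [Fintype V] (Q : V × V → ℝ) (hQz : ∀ e, Q e = 0)
    (α β : V → ℝ) (hα : ∀ x, 0 ≤ α x)
    (hdiv : ∀ x, (∑ y, Q (x, y)) - ∑ y, Q (y, x) = α x - β x) :
    ∃ σ : V × V → ℝ, (∀ p, 0 ≤ σ p) ∧ (∀ x, ∑ y, σ (x, y) = α x) ∧
      (∀ y, ∑ x, σ (x, y) = β y) ∧
      ∀ x y, 0 < σ (x, y) → Relation.ReflTransGen (fun a b => 0 < Q (a, b)) x y := by
  classical
  have hab : ∀ x, α x = β x := by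
    intro x; have := hdiv x; simp [hQz] at this; linarith
  refine ⟨fun p => if p.1 = p.2 then α p.1 else 0, ?_, ?_, ?_, ?_⟩
  · intro p; dsimp only; split
    · exact hα _
    · exact le_rfl
  · intro x; simp
  · intro y; simp [hab]
  · intro x y h
    dsimp only at h
    split at h
    · subst ‹x = y›; exact Relation.ReflTransGen.refl
    · exact absurd h (lt_irrefl 0)

theorem exists_transport : ∀ (n : ℕ) {V : Type*} [Fintype V] (Q : V × V → ℝ),
    {e : V × V | 0 < Q e}.ncard ≤ n → (∀ e, 0 ≤ Q e) →
    AcyclicRel (fun a b => 0 < Q (a, b)) →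
    ∀ (α β : V → ℝ), (∀ x, 0 ≤ α x) → (∀ x, 0 ≤ β x) →
    (∀ x, (∑ y, Q (x, y)) - ∑ y, Q (y, x) = α x - β x) →
    ∃ σ : V × V → ℝ, (∀ p, 0 ≤ σ p) ∧ (∀ x, ∑ y, σ (x, y) = α x) ∧
      (∀ y, ∑ x, σ (x, y) = β y) ∧
      ∀ x y, 0 < σ (x, y) → Relation.ReflTransGen (fun a b => 0 < Q (a, b)) x y := by
  intro n
  induction n with
  | zero =>
    intro V _ Q hcard hQ0 hacyc α β hα hβ hdiv
    classical
    have hQz : ∀ e, Q e = 0 := by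
      intro e
      by_contra h
      have he : e ∈ {e : V × V | 0 < Q e} := lt_of_le_of_ne (hQ0 e) (Ne.symm h)
      have : 0 < {e : V × V | 0 < Q e}.ncard :=
        (Set.ncard_pos (Set.toFinite _)).mpr ⟨e, he⟩
      omega
    exact transport_base Q hQz α β hα hdiv
  | succ n ih =>
    intro V _ Q hcard hQ0 hacyc α β hα hβ hdiv
    classical
    by_cases hz : ∀ e, Q e = 0
    · exact transport_base Q hz α β hα hdiv
    · set r : V → V → Prop := fun a b => 0 < Q (a, b) with hr
      have hT : ({x : V | ∃ u, 0 < Q (u, x)}).Nonempty := by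
        push_neg at hz
        obtain ⟨e, he⟩ := hz
        exact ⟨e.2, e.1, lt_of_le_of_ne (hQ0 e) (Ne.symm he)⟩
      haveI : IsTrans V (flip (Relation.TransGen r)) :=
        ⟨fun a b c h1 h2 => Relation.TransGen.trans h2 h1⟩
      haveI : IsIrrefl V (flip (Relation.TransGen r)) := ⟨fun a => hacyc a⟩
      obtain ⟨v, hvT, hvmax⟩ :=
        (Finite.wellFounded_of_trans_of_irrefl (flip (Relation.TransGen r))).has_min
          {x : V | ∃ u, 0 < Q (u, x)} hT
      have hout : ∀ w, ¬ 0 < Q (v, w) := by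
        intro w hw
        exact hvmax w ⟨v, hw⟩ (Relation.TransGen.single hw)
      have hQv : ∀ w, Q (v, w) = 0 := fun w => le_antisymm (not_lt.mp (hout w)) (hQ0 _)
      set Q' : V × V → ℝ := fun e => if e.2 = v then 0 else Q e with hQ'
      have hQ'le : ∀ e, 0 < Q' e → 0 < Q e := by
        intro e h; simp only [hQ'] at h; split at h
        · exact absurd h (lt_irrefl 0)
        · exact h
      have hQ'0 : ∀ e, 0 ≤ Q' e := by
        intro e; simp only [hQ']; split
        · exact le_rfl
        · exact hQ0 e
      have hsub : Relation.TransGen (fun a b => 0 < Q' (a, b)) ≤ Relation.TransGen r :=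
        fun a b h => Relation.TransGen.mono (fun a b hab => hQ'le (a, b) hab) a b h
      have hacyc' : AcyclicRel (fun a b => 0 < Q' (a, b)) := fun x h => hacyc x (hsub x x h)
      have hcard' : {e : V × V | 0 < Q' e}.ncard ≤ n := by
        obtain ⟨u, hu⟩ := hvT
        have hss : {e : V × V | 0 < Q' e} ⊂ {e : V × V | 0 < Q e} := by
          constructor
          · intro e he; exact hQ'le e he
          · intro hsup
            have : 0 < Q' (u, v) := hsup hu
            simp [hQ'] at this
        have := Set.ncard_lt_ncard hss (Set.toFinite _)
        omega
      set β' : V → ℝ := fun x => if x = v then α v else β x + Q (x, v) with hβ'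
      have hβ'v : β' v = α v := by simp [hβ']
      have hβ'ne : ∀ y, y ≠ v → β' y = β y + Q (y, v) := by
        intro y hy; simp [hβ', hy]
      have hβ'0 : ∀ x, 0 ≤ β' x := by
        intro x
        by_cases hx : x = v
        · rw [hx, hβ'v]; exact hα v
        · rw [hβ'ne x hx]; exact add_nonneg (hβ x) (hQ0 _)
      have hQ'v0 : ∀ y, Q' (y, v) = 0 := by intro y; simp [hQ']
      have hQ'ne : ∀ x y, y ≠ v → Q' (x, y) = Q (x, y) := by
        intro x y hy; simp [hQ', hy]
      have hdiv' : ∀ x, (∑ y, Q' (x, y)) - ∑ y, Q' (y, x) = α x - β' x := by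
        intro x
        by_cases hx : x = v
        · rw [hx]
          have h1 : ∑ y, Q' (v, y) = 0 := by
            apply Finset.sum_eq_zero; intro y _
            by_cases hy : y = v
            · rw [hy]; exact hQ'v0 v
            · rw [hQ'ne v y hy]; exact hQv y
          have h2 : ∑ y, Q' (y, v) = 0 := Finset.sum_eq_zero fun y _ => hQ'v0 y
          rw [h1, h2, hβ'v]; ring
        · have h1 : ∑ y, Q' (x, y) = (∑ y, Q (x, y)) - Q (x, v) := by
            have e1 : ∑ y, Q' (x, y) = ∑ y ∈ Finset.univ.erase v, Q (x, y) := by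
              rw [← Finset.add_sum_erase _ (fun y => Q' (x, y)) (Finset.mem_univ v)]
              rw [hQ'v0 x, zero_add]
              exact Finset.sum_congr rfl fun y hy => hQ'ne x y (Finset.ne_of_mem_erase hy)
            rw [e1, Finset.sum_erase_eq_sub (Finset.mem_univ v)]
          have h2 : ∑ y, Q' (y, x) = ∑ y, Q (y, x) :=
            Finset.sum_congr rfl fun y _ => hQ'ne y x hx
          rw [h1, h2, hβ'ne x hx]
          have := hdiv x
          linarith
      obtain ⟨σ', hσ'0, hrow', hcol', hsupp'⟩ := ih Q' hcard' hQ'0 hacyc' α β' hα hβ'0 hdiv'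
      have hvanish : ∀ x y, β' y = 0 → σ' (x, y) = 0 := by
        intro x y hy
        have hsum : ∑ x, σ' (x, y) = 0 := by rw [hcol' y, hy]
        exact (Finset.sum_eq_zero_iff_of_nonneg (fun i _ => hσ'0 (i, y))).mp hsum x
          (Finset.mem_univ x)
      have hcomb : ∀ x y, y ≠ v →
          σ' (x, y) * (β y / β' y) + σ' (x, y) * (Q (y, v) / β' y) = σ' (x, y) := by
        intro x y hy
        by_cases hb : β' y = 0
        · rw [hvanish x y hb]; ring
        · rw [← mul_add, ← add_div, ← hβ'ne y hy, div_self hb, mul_one]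
      set σ : V × V → ℝ := fun p =>
        if p.2 = v then σ' (p.1, v) + ∑ z ∈ Finset.univ.erase v, σ' (p.1, z) * (Q (z, v) / β' z)
        else σ' p * (β p.2 / β' p.2) with hσ
      have hσv : ∀ x, σ (x, v) =
          σ' (x, v) + ∑ z ∈ Finset.univ.erase v, σ' (x, z) * (Q (z, v) / β' z) := by
        intro x; simp only [hσ, if_pos rfl]
      have hσne : ∀ x y, y ≠ v → σ (x, y) = σ' (x, y) * (β y / β' y) := by
        intro x y hy; simp only [hσ, if_neg hy]
      have hσnn : ∀ p, 0 ≤ σ p := by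
        intro p; simp only [hσ]; split
        · exact add_nonneg (hσ'0 _) (Finset.sum_nonneg fun z _ =>
            mul_nonneg (hσ'0 _) (div_nonneg (hQ0 _) (hβ'0 _)))
        · exact mul_nonneg (hσ'0 _) (div_nonneg (hβ _) (hβ'0 _))
      refine ⟨σ, hσnn, ?_, ?_, ?_⟩
      · intro x
        rw [← Finset.add_sum_erase _ (fun y => σ (x, y)) (Finset.mem_univ v), hσv x,
          Finset.sum_congr rfl (fun y hy => hσne x y (Finset.ne_of_mem_erase hy))]
        have hmerge : (∑ z ∈ Finset.univ.erase v, σ' (x, z) * (Q (z, v) / β' z)) +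
            ∑ y ∈ Finset.univ.erase v, σ' (x, y) * (β y / β' y) =
            ∑ z ∈ Finset.univ.erase v, σ' (x, z) := by
          rw [← Finset.sum_add_distrib]
          refine Finset.sum_congr rfl fun z hz => ?_
          rw [add_comm]
          exact hcomb x z (Finset.ne_of_mem_erase hz)
        rw [add_assoc, hmerge,
          Finset.add_sum_erase _ (fun y => σ' (x, y)) (Finset.mem_univ v)]
        exact hrow' x
      · intro y
        by_cases hy : y = v
        · rw [hy]
          have hswap : ∑ x, σ (x, v) =
              (∑ x, σ' (x, v)) +
                ∑ z ∈ Finset.univ.erase v, (∑ x, σ' (x, z)) * (Q (z, v) / β' z) := by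
            rw [Finset.sum_congr rfl fun x _ => hσv x, Finset.sum_add_distrib]
            congr 1
            rw [Finset.sum_comm]
            exact Finset.sum_congr rfl fun z _ => (Finset.sum_mul _ _ _).symm
          rw [hswap, hcol' v, hβ'v]
          have hterm : ∀ z ∈ Finset.univ.erase v,
              (∑ x, σ' (x, z)) * (Q (z, v) / β' z) = Q (z, v) := by
            intro z hz
            rw [hcol' z]
            by_cases hb : β' z = 0
            · have hQz0 : Q (z, v) = 0 := by
                have h1 := hβ'ne z (Finset.ne_of_mem_erase hz)
                have h2 := hβ z
                have h3 := hQ0 (z, v)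
                linarith
              rw [hb, hQz0]; ring
            · rw [mul_div_assoc', mul_comm, mul_div_assoc, div_self hb, mul_one]
          rw [Finset.sum_congr rfl hterm]
          have hsumin : ∑ z ∈ Finset.univ.erase v, Q (z, v) = ∑ z, Q (z, v) := by
            rw [Finset.sum_erase_eq_sub (Finset.mem_univ v), hQv v, sub_zero]
          rw [hsumin]
          have hd := hdiv v
          have hzero : ∑ y, Q (v, y) = 0 := Finset.sum_eq_zero fun y _ => hQv y
          rw [hzero] at hd
          linarith
        · rw [Finset.sum_congr rfl fun x _ => hσne x y hy, ← Finset.sum_mul, hcol' y]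
          by_cases hb : β' y = 0
          · have hβy : β y = 0 := by
              have h1 := hβ'ne y hy
              have h2 := hβ y; have h3 := hQ0 (y, v)
              linarith
            rw [hb, hβy]; ring
          · rw [mul_div_assoc', mul_comm, mul_div_assoc, div_self hb, mul_one]
      · intro x y hpos
        have hRT : ∀ a b, Relation.ReflTransGen (fun a b => 0 < Q' (a, b)) a b →
            Relation.ReflTransGen r a b :=
          fun a b h => Relation.ReflTransGen.mono (fun a b hab => hQ'le (a, b) hab) a b h
        by_cases hy : y = v
        · rw [hy] at hpos ⊢
          rw [hσv x] at hpos
          by_cases h1 : 0 < σ' (x, v)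
          · exact hRT _ _ (hsupp' x v h1)
          · have h1' : σ' (x, v) = 0 := le_antisymm (not_lt.mp h1) (hσ'0 _)
            rw [h1', zero_add] at hpos
            have hex : ∃ z ∈ Finset.univ.erase v, 0 < σ' (x, z) * (Q (z, v) / β' z) := by
              by_contra hcon
              push_neg at hcon
              have : ∑ z ∈ Finset.univ.erase v, σ' (x, z) * (Q (z, v) / β' z) ≤ 0 :=
                Finset.sum_nonpos fun z hz => hcon z hz
              linarith
            obtain ⟨z, hz, hzpos⟩ := hex
            have hσ'pos : 0 < σ' (x, z) := by
              rcases lt_or_eq_of_le (hσ'0 (x, z)) with h | h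
              · exact h
              · rw [← h] at hzpos; simp at hzpos
            have hQpos : 0 < Q (z, v) := by
              rcases lt_or_eq_of_le (hQ0 (z, v)) with h | h
              · exact h
              · rw [← h] at hzpos; simp at hzpos
            exact Relation.ReflTransGen.tail (hRT _ _ (hsupp' x z hσ'pos)) hQpos
        · rw [hσne x y hy] at hpos
          have hσ'pos : 0 < σ' (x, y) := by
            rcases lt_or_eq_of_le (hσ'0 (x, y)) with h | h
            · exact h
            · rw [← h] at hpos; simp at hpos
          exact hRT _ _ (hsupp' x y hσ'pos)

/-- **Economic coupling from a finite acyclic flow.**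
From an acyclic flow `Q` on a finite digraph with `div Q = μ₁ - μ₂` one obtains a coupling
`ρ` of `μ₁, μ₂` supported on pairs joined by a directed path in `(V, E(Q))` and moving the
minimal total mass `½ ∑ₓ |μ₁(x) - μ₂(x)|`. -/
theorem acyclic_flow_gives_economic_coupling {V : Type*} [Fintype V]
    (E : Set (V × V)) (hloop : ∀ x : V, (x, x) ∉ E)
    (Q : V × V → ℝ) (hQ : IsFlow E Q)
    (hacyc : AcyclicRel fun a b => 0 < Q (a, b))
    (μ₁ μ₂ : V → ℝ) (h₁ : IsProbF μ₁) (h₂ : IsProbF μ₂)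
    (hdiv : ∀ x, divergenceF Q x = μ₁ x - μ₂ x) :
    ∃ ρ : V × V → ℝ, IsCouplingF μ₁ μ₂ ρ ∧
      (∀ p : V × V, p.1 ≠ p.2 →
        ¬ Relation.TransGen (fun a b => 0 < Q (a, b)) p.1 p.2 → ρ p = 0) ∧
      (∑ p : V × V, Set.indicator {p : V × V | p.1 ≠ p.2} ρ p) =
        (1 / 2) * ∑ x, |μ₁ x - μ₂ x| := by
  classical
  obtain ⟨hQ0, -⟩ := hQ
  set m : V → ℝ := fun x => min (μ₁ x) (μ₂ x) with hm
  set α : V → ℝ := fun x => μ₁ x - m x with hα'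
  set β : V → ℝ := fun x => μ₂ x - m x with hβ'
  have hα : ∀ x, 0 ≤ α x := fun x => by
    simp only [hα', hm, sub_nonneg]; exact min_le_left _ _
  have hβ : ∀ x, 0 ≤ β x := fun x => by
    simp only [hβ', hm, sub_nonneg]; exact min_le_right _ _
  have hdiv' : ∀ x, (∑ y, Q (x, y)) - ∑ y, Q (y, x) = α x - β x := by
    intro x
    have := hdiv x
    simp only [divergenceF] at this
    simp only [hα', hβ']
    linarith
  obtain ⟨σ, hσ0, hrow, hcol, hsupp⟩ :=
    exists_transport ({e : V × V | 0 < Q e}.ncard) Q le_rfl hQ0 hacyc α β hα hβ hdiv'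
  have hdiag : ∀ x, σ (x, x) = 0 := by
    intro x
    have h1 : σ (x, x) ≤ α x := by
      rw [← hrow x]
      exact Finset.single_le_sum (fun y _ => hσ0 (x, y)) (Finset.mem_univ x)
    have h2 : σ (x, x) ≤ β x := by
      rw [← hcol x]
      exact Finset.single_le_sum (fun y _ => hσ0 (y, x)) (Finset.mem_univ x)
    have h3 : α x = 0 ∨ β x = 0 := by
      rcases le_total (μ₁ x) (μ₂ x) with h | h
      · left; simp only [hα', hm, min_eq_left h]; ring
      · right; simp only [hβ', hm, min_eq_right h]; ring
    rcases h3 with h | h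
    · exact le_antisymm (h ▸ h1) (hσ0 _)
    · exact le_antisymm (h ▸ h2) (hσ0 _)
  have hm0 : ∀ x, 0 ≤ m x := fun x => le_min (h₁.1 x) (h₂.1 x)
  refine ⟨fun p => σ p + (if p.1 = p.2 then m p.1 else 0), ⟨?_, ?_, ?_⟩, ?_, ?_⟩
  · intro p
    refine add_nonneg (hσ0 p) ?_
    split
    · exact hm0 _
    · exact le_rfl
  · intro x
    rw [Finset.sum_add_distrib, hrow x]
    have : ∑ y, (if (x, y).1 = (x, y).2 then m (x, y).1 else 0) = m x := by
      simp
    rw [this]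
    simp only [hα']; ring
  · intro y
    rw [Finset.sum_add_distrib, hcol y]
    have : ∑ x, (if (x, y).1 = (x, y).2 then m (x, y).1 else 0) = m y := by
      simp
    rw [this]
    simp only [hβ']; ring
  · intro p hne hnotrans
    dsimp only
    rw [if_neg hne, add_zero]
    by_contra h
    have hpos : 0 < σ p := lt_of_le_of_ne (hσ0 p) (Ne.symm h)
    have := hsupp p.1 p.2 hpos
    rcases Relation.reflTransGen_iff_eq_or_transGen.mp this with h1 | h2
    · exact hne h1.symm
    · exact hnotrans h2
  · have hptwise : ∀ p : V × V,
        Set.indicator {p : V × V | p.1 ≠ p.2}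
          (fun p => σ p + (if p.1 = p.2 then m p.1 else 0)) p = σ p := by
      rintro ⟨a, b⟩
      by_cases hab : a = b
      · subst hab
        rw [Set.indicator_of_notMem (by simp)]
        exact (hdiag a).symm
      · rw [Set.indicator_of_mem (by simpa using hab)]
        simp [hab]
    rw [Finset.sum_congr rfl (fun p _ => hptwise p)]
    have hLHS : ∑ p : V × V, σ p = ∑ x, α x := by
      rw [Fintype.sum_prod_type]
      exact Finset.sum_congr rfl fun x _ => hrow x
    have habs : ∀ x, |μ₁ x - μ₂ x| = μ₁ x + μ₂ x - 2 * m x := by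
      intro x
      rcases le_total (μ₁ x) (μ₂ x) with h | h
      · rw [abs_of_nonpos (by linarith)]
        simp only [hm, min_eq_left h]; ring
      · rw [abs_of_nonneg (by linarith)]
        simp only [hm, min_eq_right h]; ring
    have hsum2 : ∑ x, |μ₁ x - μ₂ x| = 2 - 2 * ∑ x, m x := by
      rw [Finset.sum_congr rfl fun x _ => habs x]
      rw [Finset.sum_sub_distrib, Finset.sum_add_distrib, h₁.2, h₂.2, ← Finset.mul_sum]
      ring
    have hsum1 : ∑ x, α x = 1 - ∑ x, m x := by
      simp only [hα']
      rw [Finset.sum_sub_distrib, h₁.2]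
    rw [hLHS, hsum1, hsum2]
    ring
end

section
/- Let (V,E) be an infinite digraph with countable vertex set and let Q be a finitely decomposable acyclic flow on (V,E) with div Q = μ₁ − μ₂ for probability measures μ₁, μ₂ on V. Then there exists a coupling ρ between μ₁ and μ₂ such that ρ(x,y) = 0 whenever x ≠ y and there is no directed path from x to y in the digraph (V,E(Q)). -/
open scoped BigOperators

variable {V : Type*}

open scoped ENNReal

namespace FDAux


lemma pathEdges_cons_cons (a b : V) (t : List V) :
    pathEdges (a :: b :: t) = (a, b) :: pathEdges (b :: t) := rfl

lemma mem_pathEdges : ∀ {l : List V} {x y : V}, (x, y) ∈ pathEdges l → x ∈ l ∧ y ∈ l.tail := by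
  intro l
  induction l with
  | nil => intro x y h; simp [pathEdges] at h
  | cons a t ih =>
    intro x y h
    cases t with
    | nil => simp [pathEdges] at h
    | cons b t' =>
      rw [pathEdges_cons_cons] at h
      rcases List.mem_cons.1 h with h | h
      · injection h with h1 h2
        rw [h1, h2]
        exact ⟨List.mem_cons_self, List.mem_cons_self⟩
      · obtain ⟨hx, hy⟩ := ih h
        exact ⟨List.mem_cons_of_mem _ hx, List.mem_cons_of_mem _ hy⟩

lemma pout_iff : ∀ {l : List V}, l.Nodup → ∀ x : V,
    (∃ y, (x, y) ∈ pathEdges l) ↔ (x ∈ l ∧ l.getLast? ≠ some x) := by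
  intro l
  induction l with
  | nil => intro _ x; simp [pathEdges]
  | cons a t ih =>
    intro hn x
    cases t with
    | nil =>
      constructor
      · rintro ⟨y, hy⟩; simp [pathEdges] at hy
      · rintro ⟨hx, hlast⟩
        rw [List.mem_singleton] at hx
        rw [List.getLast?_singleton] at hlast
        exact absurd (by rw [hx]) hlast
    | cons b t' =>
      have hn' : (b :: t').Nodup := hn.of_cons
      have hanotin : a ∉ b :: t' := (List.nodup_cons.1 hn).1
      rw [pathEdges_cons_cons]
      constructor
      · rintro ⟨y, hy⟩
        rcases List.mem_cons.1 hy with h | h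
        · injection h with h1 h2
          rw [h1]
          refine ⟨List.mem_cons_self, ?_⟩
          rw [List.getLast?_cons_cons]
          intro hc
          exact hanotin (List.mem_of_mem_getLast? (Option.mem_def.2 hc))
        · obtain ⟨hx, hlast⟩ := (ih hn' x).1 ⟨y, h⟩
          rw [List.getLast?_cons_cons]
          exact ⟨List.mem_cons_of_mem _ hx, hlast⟩
      · rintro ⟨hx, hlast⟩
        rw [List.getLast?_cons_cons] at hlast
        rcases List.mem_cons.1 hx with rfl | hx
        · exact ⟨b, List.mem_cons_self⟩
        · obtain ⟨y, hy⟩ := (ih hn' x).2 ⟨hx, hlast⟩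
          exact ⟨y, List.mem_cons_of_mem _ hy⟩

lemma pin_iff : ∀ {l : List V}, l.Nodup → ∀ x : V,
    (∃ y, (y, x) ∈ pathEdges l) ↔ (x ∈ l ∧ l.head? ≠ some x) := by
  intro l
  induction l with
  | nil => intro _ x; simp [pathEdges]
  | cons a t ih =>
    intro hn x
    cases t with
    | nil =>
      constructor
      · rintro ⟨y, hy⟩; simp [pathEdges] at hy
      · rintro ⟨hx, hhead⟩
        rw [List.mem_singleton] at hx
        rw [List.head?_cons] at hhead
        exact absurd (by rw [hx]) hhead
    | cons b t' =>
      have hn' : (b :: t').Nodup := hn.of_cons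
      have hanotin : a ∉ b :: t' := (List.nodup_cons.1 hn).1
      have hbnotin : b ∉ t' := (List.nodup_cons.1 hn').1
      rw [pathEdges_cons_cons]
      constructor
      · rintro ⟨y, hy⟩
        rcases List.mem_cons.1 hy with h | h
        · injection h with h1 h2
          rw [h2]
          refine ⟨List.mem_cons_of_mem _ (List.mem_cons_self), ?_⟩
          rw [List.head?_cons]
          intro hc
          rw [Option.some_inj] at hc
          rw [hc] at hanotin
          exact hanotin (List.mem_cons_self)
        · obtain ⟨hx, _⟩ := (ih hn' x).1 ⟨y, h⟩
          rw [List.head?_cons]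
          refine ⟨List.mem_cons_of_mem _ hx, fun hc => ?_⟩
          rw [Option.some_inj] at hc
          rw [hc] at hanotin
          exact hanotin hx
      · rintro ⟨hx, hhead⟩
        rw [List.head?_cons] at hhead
        have hxa : x ≠ a := fun h => hhead (by rw [h])
        have hx' : x ∈ b :: t' := by
          rcases List.mem_cons.1 hx with rfl | hx''
          · exact absurd rfl hxa
          · exact hx''
        rcases List.mem_cons.1 hx' with rfl | hx''
        · exact ⟨a, List.mem_cons_self⟩
        · have hkey : x ∈ b :: t' ∧ (b :: t').head? ≠ some x := by
            refine ⟨hx', ?_⟩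
            rw [List.head?_cons]
            intro hc
            rw [Option.some_inj] at hc
            rw [hc] at hbnotin
            exact hbnotin hx''
          obtain ⟨y, hy⟩ := (ih hn' x).2 hkey
          exact ⟨y, List.mem_cons_of_mem _ hy⟩

lemma out_unique : ∀ {l : List V}, l.Nodup → ∀ {x y y' : V},
    (x, y) ∈ pathEdges l → (x, y') ∈ pathEdges l → y = y' := by
  intro l
  induction l with
  | nil => intro _ x y y' h _; simp [pathEdges] at h
  | cons a t ih =>
    intro hn x y y' h h'
    cases t with
    | nil => simp [pathEdges] at h
    | cons b t' =>
      have hn' : (b :: t').Nodup := hn.of_cons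
      have hanotin : a ∉ b :: t' := (List.nodup_cons.1 hn).1
      rw [pathEdges_cons_cons] at h h'
      rcases List.mem_cons.1 h with h1 | h1 <;> rcases List.mem_cons.1 h' with h2 | h2
      · injection h1 with e1 e2
        injection h2 with e3 e4
        rw [e2, e4]
      · injection h1 with e1 e2
        rw [← e1] at hanotin
        exact absurd (mem_pathEdges h2).1 hanotin
      · injection h2 with e3 e4
        rw [← e3] at hanotin
        exact absurd (mem_pathEdges h1).1 hanotin
      · exact ih hn' h1 h2

lemma in_unique : ∀ {l : List V}, l.Nodup → ∀ {x y y' : V},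
    (y, x) ∈ pathEdges l → (y', x) ∈ pathEdges l → y = y' := by
  intro l
  induction l with
  | nil => intro _ x y y' h _; simp [pathEdges] at h
  | cons a t ih =>
    intro hn x y y' h h'
    cases t with
    | nil => simp [pathEdges] at h
    | cons b t' =>
      have hn' : (b :: t').Nodup := hn.of_cons
      have hbnotin : b ∉ t' := (List.nodup_cons.1 hn').1
      rw [pathEdges_cons_cons] at h h'
      rcases List.mem_cons.1 h with h1 | h1 <;> rcases List.mem_cons.1 h' with h2 | h2
      · injection h1 with e1 e2
        injection h2 with e3 e4
        rw [e1, e3]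
      · injection h1 with e1 e2
        rw [← e2] at hbnotin
        exact absurd (mem_pathEdges h2).2 hbnotin
      · injection h2 with e3 e4
        rw [← e4] at hbnotin
        exact absurd (mem_pathEdges h1).2 hbnotin
      · exact ih hn' h1 h2

lemma chain'_reflTransGen {r : V → V → Prop} :
    ∀ {l : List V} {x y : V}, l.Chain' r → l.head? = some x → l.getLast? = some y →
      Relation.ReflTransGen r x y := by
  intro l
  induction l with
  | nil => intro x y _ h _; simp at h
  | cons a t ih =>
    intro x y hc hh hl
    rw [List.head?_cons, Option.some_inj] at hh
    subst hh
    cases t with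
    | nil =>
      rw [List.getLast?_singleton, Option.some_inj] at hl
      subst hl; exact Relation.ReflTransGen.refl
    | cons b t' =>
      rw [List.getLast?_cons_cons] at hl
      have hr : r a b := (List.isChain_cons_cons.1 hc).1
      exact Relation.ReflTransGen.head hr (ih (List.isChain_cons_cons.1 hc).2 (List.head?_cons) hl)

lemma chain'_transGen {r : V → V → Prop} {l : List V} {x y : V} (hc : l.Chain' r)
    (hh : l.head? = some x) (hl : l.getLast? = some y) (hxy : x ≠ y) :
    Relation.TransGen r x y := by
  rcases (Relation.reflTransGen_iff_eq_or_transGen.1 (chain'_reflTransGen hc hh hl)) with h | h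
  · exact absurd h.symm hxy
  · exact h

lemma chain'_of_pathEdges {P : V → V → Prop} :
    ∀ {l : List V}, (∀ p ∈ pathEdges l, P p.1 p.2) → l.Chain' P := by
  intro l
  induction l with
  | nil => intro _; exact List.isChain_nil
  | cons a t ih =>
    intro h
    cases t with
    | nil => exact List.isChain_singleton a
    | cons b t' =>
      rw [pathEdges_cons_cons] at h
      refine List.isChain_cons_cons.2 ⟨h (a, b) (List.mem_cons_self), ih ?_⟩
      intro p hp; exact h p (List.mem_cons_of_mem _ hp)




/-! ### generic tsum helpers -/

open scoped Classical

lemma tsum_ite_unique {p : V → Prop} [inst : ∀ y, Decidable (p y)] (hu : ∀ y y', p y → p y' → y = y') (c : ℝ≥0∞) :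
    (∑' y, if p y then c else 0) = if ∃ y, p y then c else 0 := by
  by_cases h : ∃ y, p y
  · obtain ⟨y₀, hy₀⟩ := h
    rw [if_pos ⟨y₀, hy₀⟩, tsum_eq_single y₀, if_pos hy₀]
    intro b hb
    rw [if_neg (fun hpb => hb (hu _ _ hpb hy₀))]
  · rw [if_neg h]
    rw [show (fun y => if p y then c else 0) = fun _ => (0:ℝ≥0∞) from ?_, tsum_zero]
    funext y
    exact if_neg (fun hp => h ⟨y, hp⟩)

lemma tsum_ite_le {p : V → Prop} [inst : ∀ y, Decidable (p y)] (hu : ∀ y y', p y → p y' → y = y') (c : ℝ≥0∞) :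
    (∑' y, if p y then c else 0) ≤ c := by
  rw [tsum_ite_unique hu c]
  split <;> simp

lemma tsum_pinch {f g : V → ℝ≥0∞} (hle : ∀ x, f x ≤ g x) (hfin : ∑' x, g x ≠ ∞)
    (hsum : ∑' x, g x ≤ ∑' x, f x) (a : V) : g a = f a := by
  refine le_antisymm ?_ (hle a)
  have h1 := ENNReal.tsum_eq_add_tsum_ite (f := f) a
  have h2 := ENNReal.tsum_eq_add_tsum_ite (f := g) a
  have hS : (∑' x, if x = a then 0 else f x) ≤ ∑' x, if x = a then 0 else g x :=
    ENNReal.tsum_le_tsum (fun x => by by_cases hx : x = a <;> simp [hx, hle x])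
  have hSfin : (∑' x, if x = a then 0 else g x) ≠ ∞ := by
    refine ne_top_of_le_ne_top hfin ?_
    rw [h2]; exact le_add_self
  have hmain : g a + (∑' x, if x = a then 0 else g x)
      ≤ f a + (∑' x, if x = a then 0 else g x) := by
    calc g a + (∑' x, if x = a then 0 else g x) = ∑' x, g x := h2.symm
      _ ≤ ∑' x, f x := hsum
      _ = f a + (∑' x, if x = a then 0 else f x) := h1
      _ ≤ f a + (∑' x, if x = a then 0 else g x) := add_le_add_right hS _
  exact (ENNReal.add_le_add_iff_right hSfin).1 hmain

/-! ### the endpoint measure and mass function -/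

section Setup

variable (γ : ℕ → List V) (q : ℕ → ℝ) (μ₁ μ₂ : V → ℝ)

noncomputable def qE (n : ℕ) : ℝ≥0∞ := ENNReal.ofReal (q n)

noncomputable def pfE (l : List V) (e : V × V) : ℝ≥0∞ := if e ∈ pathEdges l then 1 else 0

noncomputable def nuE (x y : V) : ℝ≥0∞ :=
  ∑' n, if (γ n).head? = some x ∧ (γ n).getLast? = some y ∧ x ≠ y then qE q n else 0

noncomputable def alphaE (x : V) : ℝ≥0∞ := ∑' y, nuE γ q x y

noncomputable def betaE (y : V) : ℝ≥0∞ := ∑' x, nuE γ q x y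

noncomputable def massE (x : V) : ℝ≥0∞ := ENNReal.ofReal (μ₁ x) + betaE γ q x

variable {γ q μ₁ μ₂}

lemma qE_tsum_eq (hq0 : ∀ n, 0 ≤ q n) (hqs : Summable q) :
    ∑' n, qE q n = ENNReal.ofReal (∑' n, q n) :=
  (ENNReal.ofReal_tsum_of_nonneg hq0 hqs).symm

lemma qE_tsum_ne_top (hq0 : ∀ n, 0 ≤ q n) (hqs : Summable q) :
    ∑' n, qE q n ≠ ∞ := by
  rw [qE_tsum_eq hq0 hqs]; exact ENNReal.ofReal_ne_top

lemma alphaE_eq (hnodup : ∀ n, (γ n).Nodup) (hne : ∀ n, γ n ≠ []) (x : V) :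
    alphaE γ q x
      = ∑' n, if (γ n).head? = some x ∧ (γ n).getLast? ≠ some x then qE q n else 0 := by
  simp only [alphaE, nuE]
  rw [ENNReal.tsum_comm]
  congr 1
  funext n
  refine (tsum_ite_unique (p := fun a => (γ n).head? = some x ∧ (γ n).getLast? = some a ∧ x ≠ a)
      ?_ (qE q n)).trans ?_
  · rintro y y' ⟨-, hy, -⟩ ⟨-, hy', -⟩
    rw [hy] at hy'
    exact Option.some_inj.1 hy'
  · have hiff : (∃ a, (γ n).head? = some x ∧ (γ n).getLast? = some a ∧ x ≠ a)
        ↔ ((γ n).head? = some x ∧ (γ n).getLast? ≠ some x) := by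
      constructor
      · rintro ⟨y, hh, hl, hxy⟩
        refine ⟨hh, fun hc => hxy ?_⟩
        rw [hc] at hl
        exact Option.some_inj.1 hl
      · rintro ⟨hh, hl⟩
        obtain ⟨y, hy⟩ := Option.isSome_iff_exists.1 (List.getLast?_isSome.2 (hne n))
        exact ⟨y, hh, hy, fun hc => hl (by rw [← hc] at hy; exact hy)⟩
    by_cases h : (γ n).head? = some x ∧ (γ n).getLast? ≠ some x
    · rw [if_pos (hiff.2 h), if_pos h]
    · rw [if_neg (fun hc => h (hiff.1 hc)), if_neg h]

lemma betaE_eq (hnodup : ∀ n, (γ n).Nodup) (hne : ∀ n, γ n ≠ []) (y : V) :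
    betaE γ q y
      = ∑' n, if (γ n).getLast? = some y ∧ (γ n).head? ≠ some y then qE q n else 0 := by
  simp only [betaE, nuE]
  rw [ENNReal.tsum_comm]
  congr 1
  funext n
  refine (tsum_ite_unique (p := fun a => (γ n).head? = some a ∧ (γ n).getLast? = some y ∧ a ≠ y)
      ?_ (qE q n)).trans ?_
  · rintro x x' ⟨hx, -, -⟩ ⟨hx', -, -⟩
    rw [hx] at hx'
    exact Option.some_inj.1 hx'
  · have hiff : (∃ a, (γ n).head? = some a ∧ (γ n).getLast? = some y ∧ a ≠ y)
        ↔ ((γ n).getLast? = some y ∧ (γ n).head? ≠ some y) := by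
      constructor
      · rintro ⟨x, hh, hl, hxy⟩
        refine ⟨hl, fun hc => hxy ?_⟩
        rw [hc] at hh
        exact (Option.some_inj.1 hh).symm
      · rintro ⟨hl, hh⟩
        obtain ⟨x, hx⟩ := Option.isSome_iff_exists.1 (List.isSome_head?.2 (hne n))
        exact ⟨x, hx, hl, fun hc => hh (by rw [hc] at hx; exact hx)⟩
    by_cases h : (γ n).getLast? = some y ∧ (γ n).head? ≠ some y
    · rw [if_pos (hiff.2 h), if_pos h]
    · rw [if_neg (fun hc => h (hiff.1 hc)), if_neg h]

/-! ### totals and finiteness -/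

lemma betaE_total_le (hnodup : ∀ n, (γ n).Nodup) (hne : ∀ n, γ n ≠ []) :
    ∑' y, betaE γ q y ≤ ∑' n, qE q n := by
  calc ∑' y, betaE γ q y
      = ∑' (y) (n), if (γ n).getLast? = some y ∧ (γ n).head? ≠ some y then qE q n else 0 :=
        tsum_congr (betaE_eq hnodup hne)
    _ = ∑' (n) (y), if (γ n).getLast? = some y ∧ (γ n).head? ≠ some y then qE q n else 0 :=
        ENNReal.tsum_comm
    _ ≤ ∑' n, qE q n := by
        refine ENNReal.tsum_le_tsum (fun n => tsum_ite_le ?_ _)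
        rintro y y' ⟨hy, -⟩ ⟨hy', -⟩
        rw [hy] at hy'
        exact Option.some_inj.1 hy'

lemma betaE_ne_top (hq0 : ∀ n, 0 ≤ q n) (hqs : Summable q)
    (hnodup : ∀ n, (γ n).Nodup) (hne : ∀ n, γ n ≠ []) (x : V) : betaE γ q x ≠ ∞ :=
  ne_top_of_le_ne_top (qE_tsum_ne_top hq0 hqs)
    (le_trans (ENNReal.le_tsum x) (betaE_total_le hnodup hne))

lemma massE_ne_top (hq0 : ∀ n, 0 ≤ q n) (hqs : Summable q)
    (hnodup : ∀ n, (γ n).Nodup) (hne : ∀ n, γ n ≠ []) (x : V) : massE γ q μ₁ x ≠ ∞ :=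
  ENNReal.add_ne_top.2 ⟨ENNReal.ofReal_ne_top, betaE_ne_top hq0 hqs hnodup hne x⟩

lemma massE_total_ne_top (hq0 : ∀ n, 0 ≤ q n) (hqs : Summable q)
    (hnodup : ∀ n, (γ n).Nodup) (hne : ∀ n, γ n ≠ [])
    (hμ₁ : ∀ x, 0 ≤ μ₁ x) (hμ₁s : Summable μ₁) :
    ∑' x, massE γ q μ₁ x ≠ ∞ := by
  have h1 : ∑' x, massE γ q μ₁ x = (∑' x, ENNReal.ofReal (μ₁ x)) + ∑' x, betaE γ q x := by
    rw [← ENNReal.tsum_add]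
    rfl
  rw [h1, ← ENNReal.ofReal_tsum_of_nonneg hμ₁ hμ₁s]
  exact ENNReal.add_ne_top.2 ⟨ENNReal.ofReal_ne_top,
    ne_top_of_le_ne_top (qE_tsum_ne_top hq0 hqs) (betaE_total_le hnodup hne)⟩

lemma pathFlow_eq (l : List V) (e : V × V) :
    pathFlow l e = if e ∈ pathEdges l then (1:ℝ) else 0 := by
  simp [pathFlow, Set.indicator_apply, Set.mem_setOf_eq]

/-! ### rewriting `Q` row and column sums -/

section WithQ

variable {Q : V × V → ℝ}

lemma ofReal_Q_eq (hq0 : ∀ n, 0 ≤ q n) (hqs : Summable q)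
    (hQeq : ∀ e, Q e = ∑' n, q n * pathFlow (γ n) e) (e : V × V) :
    ENNReal.ofReal (Q e) = ∑' n, if e ∈ pathEdges (γ n) then qE q n else 0 := by
  have hnn : ∀ n, 0 ≤ q n * pathFlow (γ n) e := by
    intro n
    refine mul_nonneg (hq0 n) ?_
    rw [pathFlow_eq]
    split <;> norm_num
  have hsummable : Summable (fun n => q n * pathFlow (γ n) e) := by
    refine Summable.of_nonneg_of_le hnn (fun n => ?_) hqs
    rw [pathFlow_eq]
    split <;> simp [hq0 n]
  rw [hQeq e, ENNReal.ofReal_tsum_of_nonneg hnn hsummable]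
  congr 1
  funext n
  rw [pathFlow_eq]
  by_cases hm : e ∈ pathEdges (γ n)
  · rw [if_pos hm, if_pos hm]
    simp [qE]
  · rw [if_neg hm, if_neg hm]
    simp

lemma sum_ofReal_Q_row (hq0 : ∀ n, 0 ≤ q n) (hqs : Summable q) (hnodup : ∀ n, (γ n).Nodup)
    (hQeq : ∀ e, Q e = ∑' n, q n * pathFlow (γ n) e) (x : V) :
    ∑' y, ENNReal.ofReal (Q (x, y))
      = ∑' n, if ∃ y, (x, y) ∈ pathEdges (γ n) then qE q n else 0 := by
  calc ∑' y, ENNReal.ofReal (Q (x, y))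
      = ∑' (y) (n), if (x, y) ∈ pathEdges (γ n) then qE q n else 0 :=
        tsum_congr (fun y => ofReal_Q_eq hq0 hqs hQeq (x, y))
    _ = ∑' (n) (y), if (x, y) ∈ pathEdges (γ n) then qE q n else 0 := ENNReal.tsum_comm
    _ = ∑' n, if ∃ y, (x, y) ∈ pathEdges (γ n) then qE q n else 0 := by
        refine tsum_congr (fun n => ?_)
        exact tsum_ite_unique (fun y y' hy hy' => out_unique (hnodup n) hy hy') _

lemma sum_ofReal_Q_col (hq0 : ∀ n, 0 ≤ q n) (hqs : Summable q) (hnodup : ∀ n, (γ n).Nodup)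
    (hQeq : ∀ e, Q e = ∑' n, q n * pathFlow (γ n) e) (x : V) :
    ∑' y, ENNReal.ofReal (Q (y, x))
      = ∑' n, if ∃ y, (y, x) ∈ pathEdges (γ n) then qE q n else 0 := by
  calc ∑' y, ENNReal.ofReal (Q (y, x))
      = ∑' (y) (n), if (y, x) ∈ pathEdges (γ n) then qE q n else 0 :=
        tsum_congr (fun y => ofReal_Q_eq hq0 hqs hQeq (y, x))
    _ = ∑' (n) (y), if (y, x) ∈ pathEdges (γ n) then qE q n else 0 := ENNReal.tsum_comm
    _ = ∑' n, if ∃ y, (y, x) ∈ pathEdges (γ n) then qE q n else 0 := by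
        refine tsum_congr (fun n => ?_)
        exact tsum_ite_unique (fun y y' hy hy' => in_unique (hnodup n) hy hy') _

end WithQ

/-! ### per-path balance -/

lemma perpath_balance (hnodup : ∀ n, (γ n).Nodup) (n : ℕ) (x : V) :
    (if ∃ y, (x, y) ∈ pathEdges (γ n) then qE q n else 0)
      + (if (γ n).getLast? = some x then qE q n else 0)
    = (if ∃ y, (y, x) ∈ pathEdges (γ n) then qE q n else 0)
      + (if (γ n).head? = some x then qE q n else 0) := by
  by_cases hx : x ∈ γ n
  · by_cases hl : (γ n).getLast? = some x <;> by_cases hh : (γ n).head? = some x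
    · rw [if_pos hl, if_pos hh,
        if_neg (fun hc => ((pout_iff (hnodup n) x).1 hc).2 hl),
        if_neg (fun hc => ((pin_iff (hnodup n) x).1 hc).2 hh)]
    · rw [if_pos hl, if_neg hh,
        if_neg (fun hc => ((pout_iff (hnodup n) x).1 hc).2 hl),
        if_pos ((pin_iff (hnodup n) x).2 ⟨hx, hh⟩)]
      rw [zero_add, add_zero]
    · rw [if_neg hl, if_pos hh,
        if_pos ((pout_iff (hnodup n) x).2 ⟨hx, hl⟩),
        if_neg (fun hc => ((pin_iff (hnodup n) x).1 hc).2 hh)]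
      rw [zero_add, add_zero]
    · rw [if_neg hl, if_neg hh,
        if_pos ((pout_iff (hnodup n) x).2 ⟨hx, hl⟩),
        if_pos ((pin_iff (hnodup n) x).2 ⟨hx, hh⟩)]
  · rw [if_neg (fun hc => hx (List.mem_of_mem_getLast? (Option.mem_def.2 hc))),
      if_neg (fun hc => hx (List.mem_of_mem_head? (Option.mem_def.2 hc))),
      if_neg (fun hc => hx ((pout_iff (hnodup n) x).1 hc).1),
      if_neg (fun hc => hx ((pin_iff (hnodup n) x).1 hc).1)]

/-! ### global sums -/

noncomputable def outS (γ : ℕ → List V) (q : ℕ → ℝ) (x : V) : ℝ≥0∞ :=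
  ∑' n, if ∃ y, (x, y) ∈ pathEdges (γ n) then qE q n else 0

noncomputable def inS (γ : ℕ → List V) (q : ℕ → ℝ) (x : V) : ℝ≥0∞ :=
  ∑' n, if ∃ y, (y, x) ∈ pathEdges (γ n) then qE q n else 0

noncomputable def lastS (γ : ℕ → List V) (q : ℕ → ℝ) (x : V) : ℝ≥0∞ :=
  ∑' n, if (γ n).getLast? = some x then qE q n else 0

noncomputable def headS (γ : ℕ → List V) (q : ℕ → ℝ) (x : V) : ℝ≥0∞ :=
  ∑' n, if (γ n).head? = some x then qE q n else 0

noncomputable def diagS (γ : ℕ → List V) (q : ℕ → ℝ) (x : V) : ℝ≥0∞ :=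
  ∑' n, if (γ n).head? = some x ∧ (γ n).getLast? = some x then qE q n else 0

lemma ite_le_tsum_bound (q : ℕ → ℝ) (p : ℕ → Prop) [∀ n, Decidable (p n)] :
    (∑' n, if p n then qE q n else 0) ≤ ∑' n, qE q n :=
  ENNReal.tsum_le_tsum (fun n => by split <;> simp)

lemma global_balance (hnodup : ∀ n, (γ n).Nodup) (x : V) :
    outS γ q x + lastS γ q x = inS γ q x + headS γ q x := by
  have h := tsum_congr (L := SummationFilter.unconditional ℕ) (fun n => perpath_balance (γ := γ) (q := q) hnodup n x)
  rw [ENNReal.tsum_add, ENNReal.tsum_add] at h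
  exact h

lemma headS_split (x : V) (hnodup : ∀ n, (γ n).Nodup) (hne : ∀ n, γ n ≠ []) :
    headS γ q x = alphaE γ q x + diagS γ q x := by
  rw [alphaE_eq hnodup hne]
  have h : headS γ q x = ∑' n,
      ((if (γ n).head? = some x ∧ (γ n).getLast? ≠ some x then qE q n else 0)
        + (if (γ n).head? = some x ∧ (γ n).getLast? = some x then qE q n else 0)) := by
    refine tsum_congr (fun n => ?_)
    by_cases hh : (γ n).head? = some x <;> by_cases hl : (γ n).getLast? = some x
    · rw [if_pos hh, if_neg (fun hc => hc.2 hl), if_pos ⟨hh, hl⟩, zero_add]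
    · rw [if_pos hh, if_pos ⟨hh, hl⟩, if_neg (fun hc => hl hc.2), add_zero]
    · rw [if_neg hh, if_neg (fun hc => hh hc.1), if_neg (fun hc => hh hc.1), zero_add]
    · rw [if_neg hh, if_neg (fun hc => hh hc.1), if_neg (fun hc => hh hc.1), zero_add]
  rw [h, ENNReal.tsum_add]
  rfl

lemma lastS_split (x : V) (hnodup : ∀ n, (γ n).Nodup) (hne : ∀ n, γ n ≠ []) :
    lastS γ q x = betaE γ q x + diagS γ q x := by
  rw [betaE_eq hnodup hne]
  have h : lastS γ q x = ∑' n,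
      ((if (γ n).getLast? = some x ∧ (γ n).head? ≠ some x then qE q n else 0)
        + (if (γ n).head? = some x ∧ (γ n).getLast? = some x then qE q n else 0)) := by
    refine tsum_congr (fun n => ?_)
    by_cases hl : (γ n).getLast? = some x <;> by_cases hh : (γ n).head? = some x
    · rw [if_pos hl, if_neg (fun hc => hc.2 hh), if_pos ⟨hh, hl⟩, zero_add]
    · rw [if_pos hl, if_pos ⟨hl, hh⟩, if_neg (fun hc => hh hc.1), add_zero]
    · rw [if_neg hl, if_neg (fun hc => hl hc.1), if_neg (fun hc => hl hc.2), zero_add]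
    · rw [if_neg hl, if_neg (fun hc => hl hc.1), if_neg (fun hc => hl hc.2), zero_add]
  rw [h, ENNReal.tsum_add]
  rfl

/-! ### the mass balance -/

lemma mass_balance {Q : V × V → ℝ}
    (hq0 : ∀ n, 0 ≤ q n) (hqs : Summable q)
    (hnodup : ∀ n, (γ n).Nodup) (hne : ∀ n, γ n ≠ [])
    (hQeq : ∀ e, Q e = ∑' n, q n * pathFlow (γ n) e)
    (hμ₁ : ∀ x, 0 ≤ μ₁ x) (hμ₂ : ∀ x, 0 ≤ μ₂ x)
    (hQ0 : ∀ e, 0 ≤ Q e)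
    (hdiv : ∀ x, divergence Q x = μ₁ x - μ₂ x) (x : V) :
    massE γ q μ₁ x = ENNReal.ofReal (μ₂ x) + alphaE γ q x := by
  have hQT := qE_tsum_ne_top hq0 hqs
  have houtfin : outS γ q x ≠ ∞ := ne_top_of_le_ne_top hQT (ite_le_tsum_bound _ _)
  have hinfin : inS γ q x ≠ ∞ := ne_top_of_le_ne_top hQT (ite_le_tsum_bound _ _)
  have hlastfin : lastS γ q x ≠ ∞ := ne_top_of_le_ne_top hQT (ite_le_tsum_bound _ _)
  have hheadfin : headS γ q x ≠ ∞ := ne_top_of_le_ne_top hQT (ite_le_tsum_bound _ _)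
  have hdiagfin : diagS γ q x ≠ ∞ := ne_top_of_le_ne_top hQT (ite_le_tsum_bound _ _)
  have hbetafin : betaE γ q x ≠ ∞ := betaE_ne_top hq0 hqs hnodup hne x
  have halphafin : alphaE γ q x ≠ ∞ := by
    refine ne_top_of_le_ne_top hheadfin ?_
    rw [headS_split x hnodup hne]
    exact le_self_add
  -- real row and column sums
  have hrow : ∑' y, Q (x, y) = (outS γ q x).toReal := by
    have h1 : ∑' y, Q (x, y) = ∑' y, (ENNReal.ofReal (Q (x, y))).toReal :=
      tsum_congr (fun y => (ENNReal.toReal_ofReal (hQ0 _)).symm)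
    rw [h1, ← ENNReal.tsum_toReal_eq (fun y => ENNReal.ofReal_ne_top),
      sum_ofReal_Q_row hq0 hqs hnodup hQeq]
    rfl
  have hcol : ∑' y, Q (y, x) = (inS γ q x).toReal := by
    have h1 : ∑' y, Q (y, x) = ∑' y, (ENNReal.ofReal (Q (y, x))).toReal :=
      tsum_congr (fun y => (ENNReal.toReal_ofReal (hQ0 _)).symm)
    rw [h1, ← ENNReal.tsum_toReal_eq (fun y => ENNReal.ofReal_ne_top),
      sum_ofReal_Q_col hq0 hqs hnodup hQeq]
    rfl
  have E1 : (outS γ q x).toReal - (inS γ q x).toReal = μ₁ x - μ₂ x := by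
    rw [← hrow, ← hcol]
    exact hdiv x
  have E2 : (outS γ q x).toReal + (lastS γ q x).toReal
      = (inS γ q x).toReal + (headS γ q x).toReal := by
    rw [← ENNReal.toReal_add houtfin hlastfin, ← ENNReal.toReal_add hinfin hheadfin,
      global_balance hnodup x]
  have E3 : (lastS γ q x).toReal = (betaE γ q x).toReal + (diagS γ q x).toReal := by
    rw [← ENNReal.toReal_add hbetafin hdiagfin, lastS_split x hnodup hne]
  have E4 : (headS γ q x).toReal = (alphaE γ q x).toReal + (diagS γ q x).toReal := by
    rw [← ENNReal.toReal_add halphafin hdiagfin, headS_split x hnodup hne]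
  have key : μ₁ x + (betaE γ q x).toReal = μ₂ x + (alphaE γ q x).toReal := by
    rw [E3, E4] at E2
    linarith [E1, E2]
  have hbr : 0 ≤ (betaE γ q x).toReal := ENNReal.toReal_nonneg
  have har : 0 ≤ (alphaE γ q x).toReal := ENNReal.toReal_nonneg
  calc massE γ q μ₁ x = ENNReal.ofReal (μ₁ x) + ENNReal.ofReal ((betaE γ q x).toReal) := by
        rw [massE, ENNReal.ofReal_toReal hbetafin]
    _ = ENNReal.ofReal (μ₁ x + (betaE γ q x).toReal) := (ENNReal.ofReal_add (hμ₁ x) hbr).symm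
    _ = ENNReal.ofReal (μ₂ x + (alphaE γ q x).toReal) := by rw [key]
    _ = ENNReal.ofReal (μ₂ x) + ENNReal.ofReal ((alphaE γ q x).toReal) :=
        ENNReal.ofReal_add (hμ₂ x) har
    _ = ENNReal.ofReal (μ₂ x) + alphaE γ q x := by rw [ENNReal.ofReal_toReal halphafin]

end Setup

/-! ### Part 3 : the absorbing chain -/

section Chain

variable (γ : ℕ → List V) (q : ℕ → ℝ) (μ₁ μ₂ : V → ℝ)

/-- transition weight of the endpoint chain -/
noncomputable def wker (z y : V) : ℝ≥0∞ := nuE γ q z y * (massE γ q μ₁ z)⁻¹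

/-- `k`-step transition mass of the chain -/
noncomputable def gE : ℕ → V → V → ℝ≥0∞
  | 0 => fun x y => if x = y then 1 else 0
  | (k+1) => fun x y => ∑' z, gE k x z * wker γ q μ₁ z y

/-- mass at `y` at time `k`, starting from `μ₁` -/
noncomputable def uE (k : ℕ) (y : V) : ℝ≥0∞ :=
  ∑' x, ENNReal.ofReal (μ₁ x) * gE γ q μ₁ k x y

/-- the candidate coupling -/
noncomputable def rhoE (x y : V) : ℝ≥0∞ :=
  ENNReal.ofReal (μ₁ x) * (∑' k, gE γ q μ₁ k x y)
    * (ENNReal.ofReal (μ₂ y) * (massE γ q μ₁ y)⁻¹)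

variable {γ q μ₁ μ₂}

lemma enn_mul_div_le (a b : ℝ≥0∞) : a * (b * a⁻¹) ≤ b := by
  calc a * (b * a⁻¹) = b * (a * a⁻¹) := by ring
    _ ≤ b * 1 := by
        refine mul_le_mul_right ?_ b
        rw [← div_eq_mul_inv]
        exact ENNReal.div_self_le_one
    _ = b := mul_one b

lemma uE_zero (y : V) : uE γ q μ₁ 0 y = ENNReal.ofReal (μ₁ y) := by
  rw [uE]
  rw [tsum_eq_single y ?_]
  · show ENNReal.ofReal (μ₁ y) * (if y = y then 1 else 0) = _
    rw [if_pos rfl, mul_one]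
  · intro x hx
    show ENNReal.ofReal (μ₁ x) * (if x = y then 1 else 0) = 0
    rw [if_neg hx, mul_zero]

lemma uE_succ (k : ℕ) (y : V) :
    uE γ q μ₁ (k + 1) y = ∑' z, uE γ q μ₁ k z * wker γ q μ₁ z y := by
  calc uE γ q μ₁ (k + 1) y
      = ∑' x, ENNReal.ofReal (μ₁ x) * ∑' z, gE γ q μ₁ k x z * wker γ q μ₁ z y := rfl
    _ = ∑' (x) (z), ENNReal.ofReal (μ₁ x) * (gE γ q μ₁ k x z * wker γ q μ₁ z y) :=
        tsum_congr (fun x => ENNReal.tsum_mul_left.symm)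
    _ = ∑' (z) (x), ENNReal.ofReal (μ₁ x) * gE γ q μ₁ k x z * wker γ q μ₁ z y := by
        rw [ENNReal.tsum_comm]
        exact tsum_congr (fun z => tsum_congr (fun x => (mul_assoc _ _ _).symm))
    _ = ∑' z, uE γ q μ₁ k z * wker γ q μ₁ z y :=
        tsum_congr (fun z => ENNReal.tsum_mul_right)

lemma sum_uE_le (K : ℕ) (y : V) :
    ∑ k ∈ Finset.range K, uE γ q μ₁ k y ≤ massE γ q μ₁ y := by
  induction K generalizing y with
  | zero => simp
  | succ K ih =>
    rw [Finset.sum_range_succ']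
    have h1 : ∑ k ∈ Finset.range K, uE γ q μ₁ (k + 1) y
        = ∑' z, (∑ k ∈ Finset.range K, uE γ q μ₁ k z) * wker γ q μ₁ z y := by
      calc ∑ k ∈ Finset.range K, uE γ q μ₁ (k + 1) y
          = ∑ k ∈ Finset.range K, ∑' z, uE γ q μ₁ k z * wker γ q μ₁ z y :=
            Finset.sum_congr rfl (fun k _ => uE_succ k y)
        _ = ∑' z, ∑ k ∈ Finset.range K, uE γ q μ₁ k z * wker γ q μ₁ z y :=
            (Summable.tsum_finsetSum (fun k _ => ENNReal.summable)).symm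
        _ = ∑' z, (∑ k ∈ Finset.range K, uE γ q μ₁ k z) * wker γ q μ₁ z y :=
            tsum_congr (fun z => (Finset.sum_mul _ _ _).symm)
    have h2 : ∑' z, (∑ k ∈ Finset.range K, uE γ q μ₁ k z) * wker γ q μ₁ z y
        ≤ betaE γ q y := by
      calc ∑' z, (∑ k ∈ Finset.range K, uE γ q μ₁ k z) * wker γ q μ₁ z y
          ≤ ∑' z, massE γ q μ₁ z * wker γ q μ₁ z y :=
            ENNReal.tsum_le_tsum (fun z => mul_le_mul_left (ih z) _)
        _ ≤ ∑' z, nuE γ q z y := ENNReal.tsum_le_tsum (fun z => enn_mul_div_le _ _)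
        _ = betaE γ q y := rfl
    calc ∑ k ∈ Finset.range K, uE γ q μ₁ (k+1) y + uE γ q μ₁ 0 y
        ≤ betaE γ q y + uE γ q μ₁ 0 y := by
          rw [h1]; exact add_le_add_left h2 _
      _ = massE γ q μ₁ y := by rw [uE_zero, massE, add_comm]

lemma uE_le_massE (k : ℕ) (y : V) : uE γ q μ₁ k y ≤ massE γ q μ₁ y := by
  refine le_trans ?_ (sum_uE_le (k + 1) y)
  exact Finset.single_le_sum (f := fun k => uE γ q μ₁ k y) (fun _ _ => zero_le)
    (Finset.self_mem_range_succ k)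

lemma tsum_uE_le_massE (y : V) : ∑' k, uE γ q μ₁ k y ≤ massE γ q μ₁ y := by
  rw [ENNReal.tsum_eq_iSup_nat]
  exact iSup_le (fun K => sum_uE_le K y)

/-- absorbed mass at time `k` -/
noncomputable def absK (γ : ℕ → List V) (q : ℕ → ℝ) (μ₁ μ₂ : V → ℝ) (k : ℕ) : ℝ≥0∞ :=
  ∑' z, uE γ q μ₁ k z * (ENNReal.ofReal (μ₂ z) * (massE γ q μ₁ z)⁻¹)

/-- alive mass at time `k` -/
noncomputable def RK (γ : ℕ → List V) (q : ℕ → ℝ) (μ₁ : V → ℝ) (k : ℕ) : ℝ≥0∞ :=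
  ∑' y, uE γ q μ₁ k y

lemma RK_succ (k : ℕ) :
    RK γ q μ₁ (k + 1) = ∑' z, uE γ q μ₁ k z * (alphaE γ q z * (massE γ q μ₁ z)⁻¹) := by
  calc RK γ q μ₁ (k + 1) = ∑' y, ∑' z, uE γ q μ₁ k z * wker γ q μ₁ z y :=
        tsum_congr (fun y => uE_succ k y)
    _ = ∑' (z) (y), uE γ q μ₁ k z * (massE γ q μ₁ z)⁻¹ * nuE γ q z y := by
        rw [ENNReal.tsum_comm]
        refine tsum_congr (fun z => tsum_congr (fun y => ?_))
        rw [wker]; ring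
    _ = ∑' z, uE γ q μ₁ k z * (massE γ q μ₁ z)⁻¹ * alphaE γ q z :=
        tsum_congr (fun z => ENNReal.tsum_mul_left)
    _ = ∑' z, uE γ q μ₁ k z * (alphaE γ q z * (massE γ q μ₁ z)⁻¹) :=
        tsum_congr (fun z => by ring)

lemma RK_step
    (hfin : ∀ z, massE γ q μ₁ z ≠ ∞)
    (hbal : ∀ z, massE γ q μ₁ z = ENNReal.ofReal (μ₂ z) + alphaE γ q z)
    (k : ℕ) : absK γ q μ₁ μ₂ k + RK γ q μ₁ (k + 1) = RK γ q μ₁ k := by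
  rw [RK_succ, absK, ← ENNReal.tsum_add]
  refine tsum_congr (fun z => ?_)
  have hcomb : uE γ q μ₁ k z * (ENNReal.ofReal (μ₂ z) * (massE γ q μ₁ z)⁻¹)
      + uE γ q μ₁ k z * (alphaE γ q z * (massE γ q μ₁ z)⁻¹)
      = uE γ q μ₁ k z * (massE γ q μ₁ z * (massE γ q μ₁ z)⁻¹) := by
    rw [← mul_add, ← add_mul, ← hbal z]
  rw [hcomb]
  by_cases h0 : massE γ q μ₁ z = 0
  · have hu : uE γ q μ₁ k z = 0 := le_antisymm (h0 ▸ uE_le_massE k z) (zero_le)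
    rw [hu, zero_mul]
  · rw [ENNReal.mul_inv_cancel h0 (hfin z), mul_one]

lemma RK_zero (hμ₁ : ∀ x, 0 ≤ μ₁ x) (hμ₁s : HasSum μ₁ 1) : RK γ q μ₁ 0 = 1 := by
  have : RK γ q μ₁ 0 = ∑' y, ENNReal.ofReal (μ₁ y) := tsum_congr (fun y => uE_zero y)
  rw [this, ← ENNReal.ofReal_tsum_of_nonneg hμ₁ hμ₁s.summable, hμ₁s.tsum_eq,
    ENNReal.ofReal_one]

lemma absK_partial
    (hfin : ∀ z, massE γ q μ₁ z ≠ ∞)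
    (hbal : ∀ z, massE γ q μ₁ z = ENNReal.ofReal (μ₂ z) + alphaE γ q z)
    (hμ₁ : ∀ x, 0 ≤ μ₁ x) (hμ₁s : HasSum μ₁ 1) (K : ℕ) :
    ∑ k ∈ Finset.range K, absK γ q μ₁ μ₂ k + RK γ q μ₁ K = 1 := by
  induction K with
  | zero => simpa using RK_zero hμ₁ hμ₁s
  | succ K ih =>
    rw [Finset.sum_range_succ, add_assoc, RK_step hfin hbal K]
    exact ih

lemma RK_tendsto (hq0 : ∀ n, 0 ≤ q n) (hqs : Summable q)
    (hnodup : ∀ n, (γ n).Nodup) (hne : ∀ n, γ n ≠ [])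
    (hμ₁ : ∀ x, 0 ≤ μ₁ x) (hμ₁s : HasSum μ₁ 1) :
    Filter.Tendsto (RK γ q μ₁) Filter.atTop (nhds 0) := by
  refine ENNReal.tendsto_atTop_zero_of_tsum_ne_top ?_
  have h1 : ∑' k, RK γ q μ₁ k = ∑' y, ∑' k, uE γ q μ₁ k y := ENNReal.tsum_comm
  refine ne_top_of_le_ne_top (massE_total_ne_top hq0 hqs hnodup hne hμ₁ hμ₁s.summable) ?_
  rw [h1]
  exact ENNReal.tsum_le_tsum (fun y => tsum_uE_le_massE y)

lemma absK_total (hq0 : ∀ n, 0 ≤ q n) (hqs : Summable q)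
    (hnodup : ∀ n, (γ n).Nodup) (hne : ∀ n, γ n ≠ [])
    (hfin : ∀ z, massE γ q μ₁ z ≠ ∞)
    (hbal : ∀ z, massE γ q μ₁ z = ENNReal.ofReal (μ₂ z) + alphaE γ q z)
    (hμ₁ : ∀ x, 0 ≤ μ₁ x) (hμ₁s : HasSum μ₁ 1) :
    ∑' k, absK γ q μ₁ μ₂ k = 1 := by
  refine le_antisymm ?_ ?_
  · rw [ENNReal.tsum_eq_iSup_nat]
    refine iSup_le (fun K => ?_)
    calc ∑ k ∈ Finset.range K, absK γ q μ₁ μ₂ k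
        ≤ ∑ k ∈ Finset.range K, absK γ q μ₁ μ₂ k + RK γ q μ₁ K := le_self_add
      _ = 1 := absK_partial hfin hbal hμ₁ hμ₁s K
  · have hev : ∀ K, (1 : ℝ≥0∞) ≤ (∑' k, absK γ q μ₁ μ₂ k) + RK γ q μ₁ K := by
      intro K
      rw [← absK_partial hfin hbal hμ₁ hμ₁s K]
      exact add_le_add_left (ENNReal.sum_le_tsum _) _
    have htd : Filter.Tendsto (fun K => (∑' k, absK γ q μ₁ μ₂ k) + RK γ q μ₁ K)
        Filter.atTop (nhds ((∑' k, absK γ q μ₁ μ₂ k) + 0)) :=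
      Filter.Tendsto.add tendsto_const_nhds (RK_tendsto hq0 hqs hnodup hne hμ₁ hμ₁s)
    have := ge_of_tendsto' htd hev
    rwa [add_zero] at this

end Chain

/-! ### Part 4 : marginals of `rhoE` -/

section Rho

variable {γ : ℕ → List V} {q : ℕ → ℝ} {μ₁ μ₂ : V → ℝ}

lemma colE_eq (y : V) :
    ∑' x, rhoE γ q μ₁ μ₂ x y
      = (∑' k, uE γ q μ₁ k y) * (ENNReal.ofReal (μ₂ y) * (massE γ q μ₁ y)⁻¹) := by
  have h1 : ∑' x, ENNReal.ofReal (μ₁ x) * (∑' k, gE γ q μ₁ k x y)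
      = ∑' k, uE γ q μ₁ k y := by
    calc ∑' x, ENNReal.ofReal (μ₁ x) * (∑' k, gE γ q μ₁ k x y)
        = ∑' (x) (k), ENNReal.ofReal (μ₁ x) * gE γ q μ₁ k x y :=
          tsum_congr (fun x => ENNReal.tsum_mul_left.symm)
      _ = ∑' (k) (x), ENNReal.ofReal (μ₁ x) * gE γ q μ₁ k x y := ENNReal.tsum_comm
      _ = ∑' k, uE γ q μ₁ k y := rfl
  rw [← h1, ← ENNReal.tsum_mul_right]
  rfl

lemma colE_le (y : V) :
    ∑' x, rhoE γ q μ₁ μ₂ x y ≤ ENNReal.ofReal (μ₂ y) := by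
  rw [colE_eq]
  calc (∑' k, uE γ q μ₁ k y) * (ENNReal.ofReal (μ₂ y) * (massE γ q μ₁ y)⁻¹)
      ≤ massE γ q μ₁ y * (ENNReal.ofReal (μ₂ y) * (massE γ q μ₁ y)⁻¹) :=
        mul_le_mul_left (tsum_uE_le_massE y) _
    _ ≤ ENNReal.ofReal (μ₂ y) := enn_mul_div_le _ _

lemma colE_total (hq0 : ∀ n, 0 ≤ q n) (hqs : Summable q)
    (hnodup : ∀ n, (γ n).Nodup) (hne : ∀ n, γ n ≠ [])
    (hfin : ∀ z, massE γ q μ₁ z ≠ ∞)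
    (hbal : ∀ z, massE γ q μ₁ z = ENNReal.ofReal (μ₂ z) + alphaE γ q z)
    (hμ₁ : ∀ x, 0 ≤ μ₁ x) (hμ₁s : HasSum μ₁ 1) :
    ∑' y, ∑' x, rhoE γ q μ₁ μ₂ x y = 1 := by
  calc ∑' y, ∑' x, rhoE γ q μ₁ μ₂ x y
      = ∑' y, (∑' k, uE γ q μ₁ k y) * (ENNReal.ofReal (μ₂ y) * (massE γ q μ₁ y)⁻¹) :=
        tsum_congr colE_eq
    _ = ∑' (y) (k), uE γ q μ₁ k y * (ENNReal.ofReal (μ₂ y) * (massE γ q μ₁ y)⁻¹) :=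
        tsum_congr (fun y => ENNReal.tsum_mul_right.symm)
    _ = ∑' (k) (y), uE γ q μ₁ k y * (ENNReal.ofReal (μ₂ y) * (massE γ q μ₁ y)⁻¹) :=
        ENNReal.tsum_comm
    _ = ∑' k, absK γ q μ₁ μ₂ k := rfl
    _ = 1 := absK_total hq0 hqs hnodup hne hfin hbal hμ₁ hμ₁s

lemma rowE_le (hfin : ∀ z, massE γ q μ₁ z ≠ ∞)
    (hbal : ∀ z, massE γ q μ₁ z = ENNReal.ofReal (μ₂ z) + alphaE γ q z) (x : V) :
    ∑' y, rhoE γ q μ₁ μ₂ x y ≤ ENNReal.ofReal (μ₁ x) := by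
  have hrow : ∑' y, rhoE γ q μ₁ μ₂ x y
      = ENNReal.ofReal (μ₁ x)
        * ∑' y, (∑' k, gE γ q μ₁ k x y) * (ENNReal.ofReal (μ₂ y) * (massE γ q μ₁ y)⁻¹) := by
    rw [← ENNReal.tsum_mul_left]
    exact tsum_congr (fun y => mul_assoc _ _ _)
  rw [hrow]
  have hswap : ∑' y, (∑' k, gE γ q μ₁ k x y) * (ENNReal.ofReal (μ₂ y) * (massE γ q μ₁ y)⁻¹)
      = ∑' k, ∑' y, gE γ q μ₁ k x y * (ENNReal.ofReal (μ₂ y) * (massE γ q μ₁ y)⁻¹) := by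
    calc ∑' y, (∑' k, gE γ q μ₁ k x y) * (ENNReal.ofReal (μ₂ y) * (massE γ q μ₁ y)⁻¹)
        = ∑' (y) (k), gE γ q μ₁ k x y * (ENNReal.ofReal (μ₂ y) * (massE γ q μ₁ y)⁻¹) :=
          tsum_congr (fun y => ENNReal.tsum_mul_right.symm)
      _ = _ := ENNReal.tsum_comm
  have hr0 : ∑' y, gE γ q μ₁ 0 x y = 1 := by
    rw [tsum_eq_single x ?_]
    · show (if x = x then (1:ℝ≥0∞) else 0) = 1
      rw [if_pos rfl]
    · intro y hy
      show (if x = y then (1:ℝ≥0∞) else 0) = 0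
      rw [if_neg (fun h => hy h.symm)]
  have hstep : ∀ k, (∑' y, gE γ q μ₁ k x y * (ENNReal.ofReal (μ₂ y) * (massE γ q μ₁ y)⁻¹))
      + (∑' y, gE γ q μ₁ (k+1) x y) ≤ ∑' y, gE γ q μ₁ k x y := by
    intro k
    have h1 : ∑' y, gE γ q μ₁ (k+1) x y
        = ∑' z, gE γ q μ₁ k x z * (alphaE γ q z * (massE γ q μ₁ z)⁻¹) := by
      calc ∑' y, gE γ q μ₁ (k+1) x y
          = ∑' (y) (z), gE γ q μ₁ k x z * wker γ q μ₁ z y := rfl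
        _ = ∑' (z) (y), gE γ q μ₁ k x z * (massE γ q μ₁ z)⁻¹ * nuE γ q z y := by
            rw [ENNReal.tsum_comm]
            refine tsum_congr (fun z => tsum_congr (fun y => ?_))
            rw [wker]; ring
        _ = ∑' z, gE γ q μ₁ k x z * (massE γ q μ₁ z)⁻¹ * alphaE γ q z :=
            tsum_congr (fun z => ENNReal.tsum_mul_left)
        _ = _ := tsum_congr (fun z => by ring)
    rw [h1, ← ENNReal.tsum_add]
    refine ENNReal.tsum_le_tsum (fun z => ?_)
    calc gE γ q μ₁ k x z * (ENNReal.ofReal (μ₂ z) * (massE γ q μ₁ z)⁻¹)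
          + gE γ q μ₁ k x z * (alphaE γ q z * (massE γ q μ₁ z)⁻¹)
        = gE γ q μ₁ k x z * ((ENNReal.ofReal (μ₂ z) + alphaE γ q z) * (massE γ q μ₁ z)⁻¹) := by
          ring
      _ = gE γ q μ₁ k x z * (massE γ q μ₁ z * (massE γ q μ₁ z)⁻¹) := by rw [← hbal z]
      _ ≤ gE γ q μ₁ k x z * 1 := by
          refine mul_le_mul_right ?_ _
          rw [← div_eq_mul_inv]
          exact ENNReal.div_self_le_one
      _ = gE γ q μ₁ k x z := mul_one _
  have hpartial : ∀ K, (∑ k ∈ Finset.range K,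
      ∑' y, gE γ q μ₁ k x y * (ENNReal.ofReal (μ₂ y) * (massE γ q μ₁ y)⁻¹))
      + (∑' y, gE γ q μ₁ K x y) ≤ 1 := by
    intro K
    induction K with
    | zero => rw [Finset.sum_range_zero, zero_add, hr0]
    | succ K ih =>
      rw [Finset.sum_range_succ, add_assoc]
      exact le_trans (add_le_add_right (hstep K) _) ih
  rw [hswap]
  have hts : ∑' k, ∑' y, gE γ q μ₁ k x y * (ENNReal.ofReal (μ₂ y) * (massE γ q μ₁ y)⁻¹) ≤ 1 := by
    rw [ENNReal.tsum_eq_iSup_nat]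
    refine iSup_le (fun K => ?_)
    exact le_trans le_self_add (hpartial K)
  calc ENNReal.ofReal (μ₁ x) * ∑' k, ∑' y,
        gE γ q μ₁ k x y * (ENNReal.ofReal (μ₂ y) * (massE γ q μ₁ y)⁻¹)
      ≤ ENNReal.ofReal (μ₁ x) * 1 := mul_le_mul_right hts _
    _ = ENNReal.ofReal (μ₁ x) := mul_one _

lemma rowE_total (hq0 : ∀ n, 0 ≤ q n) (hqs : Summable q)
    (hnodup : ∀ n, (γ n).Nodup) (hne : ∀ n, γ n ≠ [])
    (hfin : ∀ z, massE γ q μ₁ z ≠ ∞)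
    (hbal : ∀ z, massE γ q μ₁ z = ENNReal.ofReal (μ₂ z) + alphaE γ q z)
    (hμ₁ : ∀ x, 0 ≤ μ₁ x) (hμ₁s : HasSum μ₁ 1) :
    ∑' x, ∑' y, rhoE γ q μ₁ μ₂ x y = 1 := by
  rw [ENNReal.tsum_comm]
  exact colE_total hq0 hqs hnodup hne hfin hbal hμ₁ hμ₁s

lemma rho_row_eq (hq0 : ∀ n, 0 ≤ q n) (hqs : Summable q)
    (hnodup : ∀ n, (γ n).Nodup) (hne : ∀ n, γ n ≠ [])
    (hfin : ∀ z, massE γ q μ₁ z ≠ ∞)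
    (hbal : ∀ z, massE γ q μ₁ z = ENNReal.ofReal (μ₂ z) + alphaE γ q z)
    (hμ₁ : ∀ x, 0 ≤ μ₁ x) (hμ₁s : HasSum μ₁ 1) (x : V) :
    ∑' y, rhoE γ q μ₁ μ₂ x y = ENNReal.ofReal (μ₁ x) := by
  have h1 : ∑' x, ENNReal.ofReal (μ₁ x) = 1 := by
    rw [← ENNReal.ofReal_tsum_of_nonneg hμ₁ hμ₁s.summable, hμ₁s.tsum_eq, ENNReal.ofReal_one]
  refine (tsum_pinch (f := fun x => ∑' y, rhoE γ q μ₁ μ₂ x y)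
    (g := fun x => ENNReal.ofReal (μ₁ x)) (fun x => rowE_le hfin hbal x) ?_ ?_ x).symm
  · rw [h1]; exact ENNReal.one_ne_top
  · rw [h1, rowE_total hq0 hqs hnodup hne hfin hbal hμ₁ hμ₁s]

lemma rho_col_eq (hq0 : ∀ n, 0 ≤ q n) (hqs : Summable q)
    (hnodup : ∀ n, (γ n).Nodup) (hne : ∀ n, γ n ≠ [])
    (hfin : ∀ z, massE γ q μ₁ z ≠ ∞)
    (hbal : ∀ z, massE γ q μ₁ z = ENNReal.ofReal (μ₂ z) + alphaE γ q z)
    (hμ₁ : ∀ x, 0 ≤ μ₁ x) (hμ₁s : HasSum μ₁ 1)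
    (hμ₂ : ∀ x, 0 ≤ μ₂ x) (hμ₂s : HasSum μ₂ 1) (y : V) :
    ∑' x, rhoE γ q μ₁ μ₂ x y = ENNReal.ofReal (μ₂ y) := by
  have h1 : ∑' y, ENNReal.ofReal (μ₂ y) = 1 := by
    rw [← ENNReal.ofReal_tsum_of_nonneg hμ₂ hμ₂s.summable, hμ₂s.tsum_eq, ENNReal.ofReal_one]
  refine (tsum_pinch (f := fun y => ∑' x, rhoE γ q μ₁ μ₂ x y)
    (g := fun y => ENNReal.ofReal (μ₂ y)) (fun y => colE_le y) ?_ ?_ y).symm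
  · rw [h1]; exact ENNReal.one_ne_top
  · rw [h1, colE_total hq0 hqs hnodup hne hfin hbal hμ₁ hμ₁s]

end Rho


/-! ### Part 5 : support and assembly -/

section Support

variable {γ : ℕ → List V} {q : ℕ → ℝ} {μ₁ μ₂ : V → ℝ} {Q : V × V → ℝ}

lemma Q_pos_on_path (hq0 : ∀ n, 0 ≤ q n) (hqs : Summable q)
    (hQeq : ∀ e, Q e = ∑' n, q n * pathFlow (γ n) e)
    {n : ℕ} (hqn : 0 < q n) : ∀ p ∈ pathEdges (γ n), 0 < Q p := by
  intro p hp
  have hnn : ∀ m, 0 ≤ q m * pathFlow (γ m) p := by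
    intro m
    refine mul_nonneg (hq0 m) ?_
    rw [pathFlow_eq]
    split <;> norm_num
  have hsummable : Summable (fun m => q m * pathFlow (γ m) p) := by
    refine Summable.of_nonneg_of_le hnn (fun m => ?_) hqs
    rw [pathFlow_eq]
    split <;> simp [hq0 m]
  have hle : q n * pathFlow (γ n) p ≤ Q p := by
    rw [hQeq p]
    exact Summable.le_tsum hsummable n (fun m _ => hnn m)
  rw [pathFlow_eq, if_pos hp, mul_one] at hle
  exact lt_of_lt_of_le hqn hle

lemma nuE_support (hq0 : ∀ n, 0 ≤ q n) (hqs : Summable q)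
    (hQeq : ∀ e, Q e = ∑' n, q n * pathFlow (γ n) e)
    {z y : V} (h : nuE γ q z y ≠ 0) :
    Relation.TransGen (fun a b => 0 < Q (a, b)) z y := by
  obtain ⟨n, hn⟩ : ∃ n,
      (if (γ n).head? = some z ∧ (γ n).getLast? = some y ∧ z ≠ y then qE q n else 0) ≠ 0 := by
    by_contra hc
    push_neg at hc
    exact h (ENNReal.tsum_eq_zero.2 hc)
  have hcond : (γ n).head? = some z ∧ (γ n).getLast? = some y ∧ z ≠ y := by
    by_contra hc
    rw [if_neg hc] at hn
    exact hn rfl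
  have hqn : 0 < q n := by
    by_contra hc
    push_neg at hc
    rw [if_pos hcond] at hn
    exact hn (by simp [qE, ENNReal.ofReal_eq_zero.2 hc])
  refine chain'_transGen ?_ hcond.1 hcond.2.1 hcond.2.2
  exact chain'_of_pathEdges (fun p hp => Q_pos_on_path hq0 hqs hQeq hqn p hp)

lemma gE_support (hq0 : ∀ n, 0 ≤ q n) (hqs : Summable q)
    (hQeq : ∀ e, Q e = ∑' n, q n * pathFlow (γ n) e) :
    ∀ (k : ℕ) {x y : V}, gE γ q μ₁ k x y ≠ 0 →
      x = y ∨ Relation.TransGen (fun a b => 0 < Q (a, b)) x y := by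
  intro k
  induction k with
  | zero =>
    intro x y h
    by_cases hxy : x = y
    · exact Or.inl hxy
    · exact absurd (if_neg hxy) h
  | succ k ih =>
    intro x y h
    obtain ⟨z, hz⟩ : ∃ z, gE γ q μ₁ k x z * wker γ q μ₁ z y ≠ 0 := by
      by_contra hc
      push_neg at hc
      exact h (ENNReal.tsum_eq_zero.2 hc)
    have hg : gE γ q μ₁ k x z ≠ 0 := fun h0 => hz (by rw [h0, zero_mul])
    have hw : nuE γ q z y ≠ 0 := by
      intro h0
      exact hz (by rw [wker, h0, zero_mul, mul_zero])
    have htrans := nuE_support hq0 hqs hQeq hw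
    rcases ih hg with rfl | hxz
    · exact Or.inr htrans
    · exact Or.inr (hxz.trans htrans)

lemma exists_coupling (hq0 : ∀ n, 0 ≤ q n) (hqs : Summable q)
    (hnodup : ∀ n, (γ n).Nodup) (hne : ∀ n, γ n ≠ [])
    (hQeq : ∀ e, Q e = ∑' n, q n * pathFlow (γ n) e)
    (hQ0 : ∀ e, 0 ≤ Q e)
    (hμ₁ : ∀ x, 0 ≤ μ₁ x) (hμ₁s : HasSum μ₁ 1)
    (hμ₂ : ∀ x, 0 ≤ μ₂ x) (hμ₂s : HasSum μ₂ 1)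
    (hdiv : ∀ x, divergence Q x = μ₁ x - μ₂ x) :
    ∃ ρ : V × V → ℝ,
      ((∀ p, 0 ≤ ρ p) ∧ (∀ x, HasSum (fun y => ρ (x, y)) (μ₁ x)) ∧
        ∀ y, HasSum (fun x => ρ (x, y)) (μ₂ y)) ∧
      ∀ p : V × V, p.1 ≠ p.2 →
        ¬ Relation.TransGen (fun a b => 0 < Q (a, b)) p.1 p.2 → ρ p = 0 := by
  have hfin : ∀ z, massE γ q μ₁ z ≠ ∞ := massE_ne_top hq0 hqs hnodup hne
  have hbal : ∀ z, massE γ q μ₁ z = ENNReal.ofReal (μ₂ z) + alphaE γ q z :=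
    mass_balance hq0 hqs hnodup hne hQeq hμ₁ hμ₂ hQ0 hdiv
  refine ⟨fun p => (rhoE γ q μ₁ μ₂ p.1 p.2).toReal, ⟨?_, ?_, ?_⟩, ?_⟩
  · intro p; exact ENNReal.toReal_nonneg
  · intro x
    have hrow := rho_row_eq hq0 hqs hnodup hne hfin hbal hμ₁ hμ₁s x
    have hnt : ∑' y, rhoE γ q μ₁ μ₂ x y ≠ ∞ := by
      rw [hrow]; exact ENNReal.ofReal_ne_top
    have hsummable : Summable (fun y => (rhoE γ q μ₁ μ₂ x y).toReal) :=
      ENNReal.summable_toReal hnt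
    refine hsummable.hasSum_iff.2 ?_
    have heach : ∀ y, rhoE γ q μ₁ μ₂ x y ≠ ∞ :=
      fun y => ne_top_of_le_ne_top hnt (ENNReal.le_tsum y)
    rw [← ENNReal.tsum_toReal_eq heach, hrow, ENNReal.toReal_ofReal (hμ₁ x)]
  · intro y
    have hcol := rho_col_eq hq0 hqs hnodup hne hfin hbal hμ₁ hμ₁s hμ₂ hμ₂s y
    have hnt : ∑' x, rhoE γ q μ₁ μ₂ x y ≠ ∞ := by
      rw [hcol]; exact ENNReal.ofReal_ne_top
    have hsummable : Summable (fun x => (rhoE γ q μ₁ μ₂ x y).toReal) :=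
      ENNReal.summable_toReal hnt
    refine hsummable.hasSum_iff.2 ?_
    have heach : ∀ x, rhoE γ q μ₁ μ₂ x y ≠ ∞ :=
      fun x => ne_top_of_le_ne_top hnt (ENNReal.le_tsum x)
    rw [← ENNReal.tsum_toReal_eq heach, hcol, ENNReal.toReal_ofReal (hμ₂ y)]
  · rintro ⟨x, y⟩ hxy htg
    simp only at hxy htg ⊢
    suffices h : rhoE γ q μ₁ μ₂ x y = 0 by rw [h]; rfl
    by_contra h
    have hmid : (∑' k, gE γ q μ₁ k x y) ≠ 0 := by
      intro h0
      exact h (by rw [rhoE, h0, mul_zero, zero_mul])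
    obtain ⟨k, hk⟩ : ∃ k, gE γ q μ₁ k x y ≠ 0 := by
      by_contra hc
      push_neg at hc
      exact hmid (ENNReal.tsum_eq_zero.2 hc)
    rcases gE_support hq0 hqs hQeq k hk with rfl | htrans
    · exact hxy rfl
    · exact htg htrans

end Support


end FDAux

/-- **From a finitely decomposable acyclic flow to a compatible coupling, infinite case.**
Given a finitely decomposable acyclic flow `Q` on an infinite countable digraph with
`div Q = μ₁ - μ₂`, there is a coupling `ρ` of `μ₁, μ₂` with `ρ(x,y) = 0` whenever `x ≠ y`
and there is no directed path from `x` to `y` in `(V, E(Q))`. -/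
theorem fin_dec_flow_gives_coupling {V : Type*} [Countable V] [Infinite V]
    (E : Set (V × V)) (hloop : ∀ x : V, (x, x) ∉ E)
    (Q : V × V → ℝ) (hQ : IsFlow E Q) (hfd : FinDecomposable E Q)
    (hacyc : AcyclicRel fun a b => 0 < Q (a, b))
    (μ₁ μ₂ : V → ℝ) (h₁ : IsProb μ₁) (h₂ : IsProb μ₂)
    (hdiv : ∀ x, divergence Q x = μ₁ x - μ₂ x) :
    ∃ ρ : V × V → ℝ, IsCoupling μ₁ μ₂ ρ ∧
      ∀ p : V × V, p.1 ≠ p.2 →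
        ¬ Relation.TransGen (fun a b => 0 < Q (a, b)) p.1 p.2 → ρ p = 0 := by
  obtain ⟨γ, q, hdip, hnodup, hq0, hqs, hQeq⟩ := hfd
  have hne : ∀ n, γ n ≠ [] := fun n => (hdip n).1
  obtain ⟨ρ, hcoup, hsupp⟩ :=
    FDAux.exists_coupling hq0 hqs hnodup hne hQeq hQ.1 h₁.1 h₁.2 h₂.1 h₂.2 hdiv
  exact ⟨ρ, ⟨hcoup.1, hcoup.2.1, hcoup.2.2⟩, hsupp⟩
end

section
/- Let (V,E) be an infinite digraph with countable vertex set and let Q be a finitely decomposable acyclic flow on (V,E) with div Q = μ₁ − μ₂ for probability measures μ₁, μ₂ on V. Then there exists a coupling ρ between μ₁ and μ₂ such that ∑_{x≠y} ρ(x,y) = (1/2) ∑_{x∈V} |μ₁(x) − μ₂(x)|, and ρ(x,y) = 0 whenever x ≠ y and there is no directed path from x to y in (V,E(Q)). -/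
open scoped BigOperators

variable {V : Type*}

open ENNReal Filter
open scoped Classical

namespace EcoCoupling

variable {V : Type*}


variable {V : Type*}

lemma tsum_ite_left (w : V) (f : ℝ≥0∞) : ∑' v, (if w = v then f else 0) = f := by
  rw [tsum_eq_single w (fun v hv => by simp [Ne.symm hv])]
  simp

lemma tsum_ite_right (w : V) (f : V → ℝ≥0∞) :
    ∑' v, (if v = w then f v else 0) = f w := by
  rw [tsum_eq_single w (fun v hv => by simp [hv])]
  simp

lemma tsum_regroup (a : ℕ → V) (g : ℕ → ℝ≥0∞) :
    ∑' (v : V), ∑' n, (if a n = v then g n else 0) = ∑' n, g n := by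
  rw [ENNReal.tsum_comm]
  exact tsum_congr fun n => tsum_ite_left (a n) (g n)

noncomputable def massAt (a : ℕ → V) (q : ℕ → ℝ≥0∞) (v : V) : ℝ≥0∞ :=
  ∑' n, if a n = v then q n else 0

lemma le_massAt (a : ℕ → V) (q : ℕ → ℝ≥0∞) (n : ℕ) : q n ≤ massAt a q (a n) := by
  have := ENNReal.le_tsum (f := fun m => if a m = a n then q m else 0) n
  simpa [massAt] using this

lemma massAt_le_total (a : ℕ → V) (q : ℕ → ℝ≥0∞) (v : V) :
    massAt a q v ≤ ∑' n, q n :=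
  Summable.tsum_le_tsum (fun n => by split <;> simp) ENNReal.summable ENNReal.summable

lemma tsum_massAt (a : ℕ → V) (q : ℕ → ℝ≥0∞) :
    ∑' v, massAt a q v = ∑' n, q n := tsum_regroup a q

lemma div_mul_le_of_le {x y t : ℝ≥0∞} (ht : t ≤ y) (hy : y ≠ ⊤) : x / y * t ≤ x := by
  rcases eq_or_ne y 0 with rfl | hy0
  · simp [le_antisymm ht zero_le]
  · calc x / y * t ≤ x / y * y := mul_le_mul_right ht _
    _ = x := ENNReal.div_mul_cancel hy0 hy

section Chain

variable (a b : ℕ → V) (q : ℕ → ℝ≥0∞) (ν₁ ν₂ : V → ℝ≥0∞)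

/-- mass currently launched: `uFlow k x v` = mass of trajectories started at `x`
that after `k` hops sit at `v`, ready to take a path starting at `v`. -/
noncomputable def uFlow : ℕ → V → V → ℝ≥0∞
  | 0 => fun x v => if v = x then ν₁ x else 0
  | (k+1) => fun x v =>
      min (massAt a q v) (massAt b q v) / massAt b q v *
        ∑' n, if b n = v then q n / massAt a q (a n) * uFlow k x (a n) else 0

/-- inflow after one more hop. -/
noncomputable def inflow (k : ℕ) (x v : V) : ℝ≥0∞ :=
  ∑' n, if b n = v then q n / massAt a q (a n) * uFlow a b q ν₁ k x (a n) else 0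

lemma uFlow_succ (k : ℕ) (x v : V) :
    uFlow a b q ν₁ (k+1) x v =
      min (massAt a q v) (massAt b q v) / massAt b q v * inflow a b q ν₁ k x v := rfl

variable {a b q ν₁ ν₂}

section Hyp

variable (hT : ∑' n, q n ≠ ⊤)
variable (hbal : ∀ v, ν₁ v + massAt b q v = ν₂ v + massAt a q v)
variable (hmin : ∀ v, min (ν₁ v) (ν₂ v) = 0)

include hbal hmin in
lemma nu1_add_min (v : V) :
    ν₁ v + min (massAt a q v) (massAt b q v) = massAt a q v := by
  rcases min_eq_iff.mp (hmin v) with ⟨h, -⟩ | ⟨h, -⟩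
  · have hle : massAt a q v ≤ massAt b q v := by
      have := hbal v; rw [h, zero_add] at this; rw [this]; exact le_add_self
    rw [h, zero_add, min_eq_left hle]
  · have := hbal v
    rw [h, zero_add] at this
    have hle : massAt b q v ≤ massAt a q v := by rw [← this]; exact le_add_self
    rw [min_eq_right hle, this]

include hbal hmin in
lemma nu2_add_min (v : V) :
    ν₂ v + min (massAt a q v) (massAt b q v) = massAt b q v := by
  have h2 : ∀ w, min (ν₂ w) (ν₁ w) = 0 := fun w => by rw [min_comm]; exact hmin w
  have hb : ∀ w, ν₂ w + massAt a q w = ν₁ w + massAt b q w := fun w => (hbal w).symm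
  have := nu1_add_min (a := b) (b := a) (ν₁ := ν₂) (ν₂ := ν₁) hb h2 v
  rwa [min_comm] at this

include hbal hmin in
lemma nu1_le (v : V) : ν₁ v ≤ massAt a q v := by
  rw [← nu1_add_min hbal hmin v]; exact self_le_add_right _ _

include hbal hmin in
lemma nu2_le (v : V) : ν₂ v ≤ massAt b q v := by
  rw [← nu2_add_min hbal hmin v]; exact self_le_add_right _ _

/-- generic bound for any family satisfying the recursion. -/
lemma gen_le (U : ℕ → V → ℝ≥0∞)
    (hU0 : ∀ v, U 0 v ≤ ν₁ v)
    (hUs : ∀ k v, U (k+1) v = min (massAt a q v) (massAt b q v) / massAt b q v *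
      ∑' n, if b n = v then q n / massAt a q (a n) * U k (a n) else 0)
    (hT : ∑' n, q n ≠ ⊤)
    (hbal : ∀ v, ν₁ v + massAt b q v = ν₂ v + massAt a q v)
    (hmin : ∀ v, min (ν₁ v) (ν₂ v) = 0) :
    ∀ k v, U k v ≤ massAt a q v := by
  intro k
  induction k with
  | zero => exact fun v => (hU0 v).trans (nu1_le hbal hmin v)
  | succ k ih =>
    intro v
    have hI : (∑' n, if b n = v then q n / massAt a q (a n) * U k (a n) else 0)
        ≤ massAt b q v := by
      refine Summable.tsum_le_tsum (fun n => ?_) ENNReal.summable ENNReal.summable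
      split
      · exact div_mul_le_of_le (ih (a n)) (ne_top_of_le_ne_top hT (massAt_le_total a q _))
      · exact le_rfl
    rw [hUs]
    calc min (massAt a q v) (massAt b q v) / massAt b q v * _
        ≤ min (massAt a q v) (massAt b q v) :=
          div_mul_le_of_le hI (ne_top_of_le_ne_top hT (massAt_le_total b q v))
      _ ≤ massAt a q v := min_le_left _ _

/-- generic partial-sum bound (Claim A). -/
lemma gen_sum_le (U : ℕ → V → ℝ≥0∞)
    (hU0 : ∀ v, U 0 v ≤ ν₁ v)
    (hUs : ∀ k v, U (k+1) v = min (massAt a q v) (massAt b q v) / massAt b q v *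
      ∑' n, if b n = v then q n / massAt a q (a n) * U k (a n) else 0)
    (hT : ∑' n, q n ≠ ⊤)
    (hbal : ∀ v, ν₁ v + massAt b q v = ν₂ v + massAt a q v)
    (hmin : ∀ v, min (ν₁ v) (ν₂ v) = 0) :
    ∀ K v, ∑ k ∈ Finset.range K, U k v ≤ massAt a q v := by
  intro K
  induction K with
  | zero => intro v; simp
  | succ K ih =>
    intro v
    rw [Finset.sum_range_succ']
    have hswap : ∑ k ∈ Finset.range K, (∑' n,
        if b n = v then q n / massAt a q (a n) * U k (a n) else 0)
        = ∑' n, if b n = v then q n / massAt a q (a n) *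
            ∑ k ∈ Finset.range K, U k (a n) else 0 := by
      rw [← Summable.tsum_finsetSum (fun i _ => ENNReal.summable)]
      refine tsum_congr fun n => ?_
      split
      · rw [Finset.mul_sum]
      · simp
    have hI : (∑' n, if b n = v then q n / massAt a q (a n) *
        ∑ k ∈ Finset.range K, U k (a n) else 0) ≤ massAt b q v := by
      refine Summable.tsum_le_tsum (fun n => ?_) ENNReal.summable ENNReal.summable
      split
      · exact div_mul_le_of_le (ih (a n)) (ne_top_of_le_ne_top hT (massAt_le_total a q _))
      · exact le_rfl
    have h2 : ∑ k ∈ Finset.range K, U (k+1) v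
        ≤ min (massAt a q v) (massAt b q v) := by
      calc ∑ k ∈ Finset.range K, U (k+1) v
          = min (massAt a q v) (massAt b q v) / massAt b q v *
            ∑ k ∈ Finset.range K, (∑' n,
              if b n = v then q n / massAt a q (a n) * U k (a n) else 0) := by
            rw [Finset.mul_sum]; exact Finset.sum_congr rfl fun k _ => hUs k v
        _ ≤ min (massAt a q v) (massAt b q v) := by
            rw [hswap]
            exact div_mul_le_of_le hI (ne_top_of_le_ne_top hT (massAt_le_total b q v))
    calc ∑ k ∈ Finset.range K, U (k+1) v + U 0 v
        ≤ min (massAt a q v) (massAt b q v) + ν₁ v := add_le_add h2 (hU0 v)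
      _ = massAt a q v := by rw [add_comm]; exact nu1_add_min hbal hmin v

include hT hbal hmin in
lemma uFlow_le (x : V) : ∀ k v, uFlow a b q ν₁ k x v ≤ massAt a q v := by
  refine gen_le (fun k v => uFlow a b q ν₁ k x v) (fun v => ?_) (fun k v => rfl) hT hbal hmin
  show (if v = x then ν₁ x else 0) ≤ ν₁ v
  split
  · next h => rw [h]
  · exact zero_le

include hT hbal hmin in
lemma uFlow_sum_le (x : V) : ∀ K v, ∑ k ∈ Finset.range K, uFlow a b q ν₁ k x v ≤ massAt a q v := by
  refine gen_sum_le (fun k v => uFlow a b q ν₁ k x v) (fun v => ?_) (fun k v => rfl) hT hbal hmin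
  show (if v = x then ν₁ x else 0) ≤ ν₁ v
  split
  · next h => rw [h]
  · exact zero_le

include hT hbal hmin in
lemma inflow_le_beta (k : ℕ) (x v : V) :
    inflow a b q ν₁ k x v ≤ massAt b q v := by
  refine Summable.tsum_le_tsum (fun n => ?_) ENNReal.summable ENNReal.summable
  split
  · exact div_mul_le_of_le (uFlow_le hT hbal hmin x k (a n))
      (ne_top_of_le_ne_top hT (massAt_le_total a q _))
  · exact le_rfl

include hT hbal hmin in
lemma inflow_total (k : ℕ) (x : V) :
    ∑' v, inflow a b q ν₁ k x v = ∑' v, uFlow a b q ν₁ k x v := by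
  have h1 : ∑' v, inflow a b q ν₁ k x v
      = ∑' n, q n / massAt a q (a n) * uFlow a b q ν₁ k x (a n) :=
    tsum_regroup b _
  rw [h1, ← tsum_regroup a (fun n => q n / massAt a q (a n) * uFlow a b q ν₁ k x (a n))]
  refine tsum_congr fun v => ?_
  have h2 : ∀ n : ℕ, (if a n = v then q n / massAt a q (a n) * uFlow a b q ν₁ k x (a n) else 0)
      = (if a n = v then q n else 0) * (uFlow a b q ν₁ k x v / massAt a q v) := by
    intro n
    split
    · next h => rw [h, div_eq_mul_inv, div_eq_mul_inv]; ring
    · rw [zero_mul]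
  rw [tsum_congr h2, ENNReal.tsum_mul_right]
  show massAt a q v * (uFlow a b q ν₁ k x v / massAt a q v) = _
  rcases eq_or_ne (massAt a q v) 0 with h0 | h0
  · have := uFlow_le hT hbal hmin x k v
    rw [h0] at this ⊢
    rw [le_antisymm this zero_le, zero_mul]
  · exact ENNReal.mul_div_cancel h0 (ne_top_of_le_ne_top hT (massAt_le_total a q v))

include hT hbal hmin in
lemma cons_pointwise (k : ℕ) (x y : V) :
    uFlow a b q ν₁ (k+1) x y + ν₂ y / massAt b q y * inflow a b q ν₁ k x y
      = inflow a b q ν₁ k x y := by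
  rcases eq_or_ne (massAt b q y) 0 with h0 | h0
  · have hI : inflow a b q ν₁ k x y = 0 :=
      le_antisymm (h0 ▸ inflow_le_beta hT hbal hmin k x y) zero_le
    rw [uFlow_succ, hI, mul_zero, mul_zero, add_zero]
  · rw [uFlow_succ]
    show min (massAt a q y) (massAt b q y) / massAt b q y * inflow a b q ν₁ k x y
        + ν₂ y / massAt b q y * inflow a b q ν₁ k x y = _
    rw [← add_mul, ENNReal.div_add_div_same, add_comm (min _ _) (ν₂ y),
      nu2_add_min hbal hmin y,
      ENNReal.div_self h0 (ne_top_of_le_ne_top hT (massAt_le_total b q y)), one_mul]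

include hT hbal hmin in
lemma mass_step (k : ℕ) (x : V) :
    (∑' v, uFlow a b q ν₁ (k+1) x v)
      + ∑' y, ν₂ y / massAt b q y * inflow a b q ν₁ k x y
      = ∑' v, uFlow a b q ν₁ k x v := by
  rw [← ENNReal.tsum_add, tsum_congr (fun y => cons_pointwise hT hbal hmin k x y),
    inflow_total hT hbal hmin k x]

lemma uFlow_zero_total (x : V) : ∑' v, uFlow a b q ν₁ 0 x v = ν₁ x := by
  show (∑' v, if v = x then ν₁ x else 0) = ν₁ x
  rw [tsum_eq_single x (fun v hv => by simp [hv])]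
  simp

include hT hbal hmin in
lemma partial_row (K : ℕ) (x : V) :
    ∑ k ∈ Finset.range K, (∑' y, ν₂ y / massAt b q y * inflow a b q ν₁ k x y)
      + ∑' v, uFlow a b q ν₁ K x v = ν₁ x := by
  induction K with
  | zero => simpa using uFlow_zero_total (a := a) (b := b) (q := q) (ν₁ := ν₁) x
  | succ K ih =>
    rw [Finset.sum_range_succ, add_assoc, add_comm
      (∑' y, ν₂ y / massAt b q y * inflow a b q ν₁ K x y) _,
      mass_step hT hbal hmin K x]
    exact ih

include hT hbal hmin in
lemma tsum_uFlow_ne_top (x : V) : (∑' k, ∑' v, uFlow a b q ν₁ k x v) ≠ ⊤ := by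
  rw [ENNReal.tsum_comm]
  refine ne_top_of_le_ne_top hT ?_
  calc (∑' v, ∑' k, uFlow a b q ν₁ k x v) ≤ ∑' v, massAt a q v := by
        refine Summable.tsum_le_tsum (fun v => ?_) ENNReal.summable ENNReal.summable
        rw [ENNReal.tsum_eq_iSup_nat]
        exact iSup_le fun K => uFlow_sum_le hT hbal hmin x K v
    _ = ∑' n, q n := tsum_massAt a q

include hT hbal hmin in
lemma row_sum (x : V) :
    ∑' k, (∑' y, ν₂ y / massAt b q y * inflow a b q ν₁ k x y) = ν₁ x := by
  have h1 : Tendsto (fun K => ∑ k ∈ Finset.range K,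
      (∑' y, ν₂ y / massAt b q y * inflow a b q ν₁ k x y)) atTop
      (nhds (∑' k, (∑' y, ν₂ y / massAt b q y * inflow a b q ν₁ k x y))) :=
    ENNReal.tendsto_nat_tsum _
  have h2 : Tendsto (fun K => ∑' v, uFlow a b q ν₁ K x v) atTop (nhds 0) :=
    ENNReal.tendsto_atTop_zero_of_tsum_ne_top (tsum_uFlow_ne_top hT hbal hmin x)
  have h3 := h1.add h2
  have h4 : Tendsto (fun K => ∑ k ∈ Finset.range K,
      (∑' y, ν₂ y / massAt b q y * inflow a b q ν₁ k x y)
      + ∑' v, uFlow a b q ν₁ K x v) atTop (nhds (ν₁ x)) := by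
    have : (fun K => ∑ k ∈ Finset.range K,
        (∑' y, ν₂ y / massAt b q y * inflow a b q ν₁ k x y)
        + ∑' v, uFlow a b q ν₁ K x v) = fun _ => ν₁ x := by
      funext K; exact partial_row hT hbal hmin K x
    rw [this]; exact tendsto_const_nhds
  have := tendsto_nhds_unique h3 h4
  rwa [add_zero] at this

lemma inflow_agg (k : ℕ) (y : V) :
    ∑' x, inflow a b q ν₁ k x y
      = ∑' n, if b n = y then q n / massAt a q (a n) * ∑' x, uFlow a b q ν₁ k x (a n)
          else 0 := by
  unfold inflow
  rw [ENNReal.tsum_comm]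
  refine tsum_congr fun n => ?_
  split
  · exact ENNReal.tsum_mul_left
  · exact tsum_zero

include hT hbal hmin in
lemma wAgg_sum_le :
    ∀ K v, ∑ k ∈ Finset.range K, (∑' x, uFlow a b q ν₁ k x v) ≤ massAt a q v := by
  refine gen_sum_le (fun k v => ∑' x, uFlow a b q ν₁ k x v) (fun v => ?_) (fun k v => ?_)
    hT hbal hmin
  · show (∑' x, if v = x then ν₁ x else 0) ≤ ν₁ v
    rw [tsum_eq_single v (fun x hx => if_neg (fun h => hx h.symm)), if_pos rfl]
  · show (∑' x, uFlow a b q ν₁ (k+1) x v) = _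
    calc (∑' x, uFlow a b q ν₁ (k+1) x v)
        = ∑' x, min (massAt a q v) (massAt b q v) / massAt b q v
            * inflow a b q ν₁ k x v := rfl
      _ = min (massAt a q v) (massAt b q v) / massAt b q v
            * ∑' x, inflow a b q ν₁ k x v := ENNReal.tsum_mul_left
      _ = _ := by rw [inflow_agg]

include hT hbal hmin in
lemma J_le (y : V) :
    ∑' k, ∑' x, inflow a b q ν₁ k x y ≤ massAt b q y := by
  rw [tsum_congr (fun k => inflow_agg (ν₁ := ν₁) k y), ENNReal.tsum_eq_iSup_nat]
  refine iSup_le fun K => ?_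
  have hswap : ∑ k ∈ Finset.range K, (∑' n,
      if b n = y then q n / massAt a q (a n) * ∑' x, uFlow a b q ν₁ k x (a n) else 0)
      = ∑' n, if b n = y then q n / massAt a q (a n) *
          ∑ k ∈ Finset.range K, (∑' x, uFlow a b q ν₁ k x (a n)) else 0 := by
    rw [← Summable.tsum_finsetSum (fun i _ => ENNReal.summable)]
    refine tsum_congr fun n => ?_
    split
    · rw [Finset.mul_sum]
    · simp
  rw [hswap]
  refine Summable.tsum_le_tsum (fun n => ?_) ENNReal.summable ENNReal.summable
  split
  · exact div_mul_le_of_le (wAgg_sum_le hT hbal hmin K (a n))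
      (ne_top_of_le_ne_top hT (massAt_le_total a q _))
  · exact le_rfl

variable (a b q ν₁ ν₂) in
/-- the off-diagonal part of the coupling. -/
noncomputable def rhoE (x y : V) : ℝ≥0∞ :=
  ∑' k, ν₂ y / massAt b q y * inflow a b q ν₁ k x y

include hT hbal hmin in
lemma rhoE_row (x : V) : ∑' y, rhoE a b q ν₁ ν₂ x y = ν₁ x := by
  rw [show (fun y => rhoE a b q ν₁ ν₂ x y) = fun y =>
    ∑' k, ν₂ y / massAt b q y * inflow a b q ν₁ k x y from rfl, ENNReal.tsum_comm]
  exact row_sum hT hbal hmin x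

include hT hbal hmin in
lemma rhoE_col_le (y : V) : ∑' x, rhoE a b q ν₁ ν₂ x y ≤ ν₂ y := by
  have h1 : ∑' x, rhoE a b q ν₁ ν₂ x y
      = ν₂ y / massAt b q y * ∑' k, ∑' x, inflow a b q ν₁ k x y := by
    rw [show (fun x => rhoE a b q ν₁ ν₂ x y) = fun x =>
      ∑' k, ν₂ y / massAt b q y * inflow a b q ν₁ k x y from rfl, ENNReal.tsum_comm]
    rw [tsum_congr (fun k => ENNReal.tsum_mul_left), ENNReal.tsum_mul_left]
  rw [h1]
  exact div_mul_le_of_le (J_le hT hbal hmin y)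
    (ne_top_of_le_ne_top hT (massAt_le_total b q y))

include hT hbal hmin in
lemma tsum_nu_eq : ∑' v, ν₁ v = ∑' v, ν₂ v := by
  have h1 : ∑' v, (ν₁ v + massAt b q v) = ∑' v, (ν₂ v + massAt a q v) :=
    tsum_congr hbal
  rw [ENNReal.tsum_add, ENNReal.tsum_add, tsum_massAt, tsum_massAt] at h1
  exact WithTop.add_right_cancel hT h1

include hT hbal hmin in
lemma tsum_nu1_ne_top : ∑' v, ν₁ v ≠ ⊤ := by
  refine ne_top_of_le_ne_top hT ?_
  calc (∑' v, ν₁ v) ≤ ∑' v, massAt a q v :=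
        Summable.tsum_le_tsum (fun v => nu1_le hbal hmin v) ENNReal.summable ENNReal.summable
    _ = ∑' n, q n := tsum_massAt a q

include hT hbal hmin in
lemma rhoE_col (y : V) : ∑' x, rhoE a b q ν₁ ν₂ x y = ν₂ y := by
  by_contra hne
  have hlt : ∑' x, rhoE a b q ν₁ ν₂ x y < ν₂ y :=
    (rhoE_col_le hT hbal hmin y).lt_of_ne hne
  have hA : ∑' (y' : V), ∑' x, rhoE a b q ν₁ ν₂ x y' = ∑' v, ν₁ v := by
    rw [ENNReal.tsum_comm]
    exact tsum_congr fun x => rhoE_row hT hbal hmin x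
  have hfi : (∑' (y' : V), ∑' x, rhoE a b q ν₁ ν₂ x y') ≠ ⊤ := by
    rw [hA]; exact tsum_nu1_ne_top hT hbal hmin
  have := ENNReal.tsum_lt_tsum hfi (fun y' => rhoE_col_le hT hbal hmin y') hlt
  rw [hA, tsum_nu_eq hT hbal hmin] at this
  exact lt_irrefl _ this

variable {r : V → V → Prop}

lemma uFlow_support (hr : ∀ n, q n ≠ 0 → Relation.ReflTransGen r (a n) (b n)) :
    ∀ k x v, uFlow a b q ν₁ k x v ≠ 0 → Relation.ReflTransGen r x v := by
  intro k
  induction k with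
  | zero =>
    intro x v h
    by_cases hvx : v = x
    · rw [hvx]
    · exact absurd (if_neg hvx) h
  | succ k ih =>
    intro x v h
    have hI : inflow a b q ν₁ k x v ≠ 0 := by
      intro h0
      rw [uFlow_succ, h0, mul_zero] at h
      exact h rfl
    obtain ⟨n, hn⟩ : ∃ n, (if b n = v then
        q n / massAt a q (a n) * uFlow a b q ν₁ k x (a n) else 0) ≠ 0 := by
      by_contra hall
      push_neg at hall
      exact hI (ENNReal.tsum_eq_zero.mpr hall)
    have hbv : b n = v := by
      by_contra hb
      exact hn (if_neg hb)
    rw [if_pos hbv] at hn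
    have hq : q n ≠ 0 := by
      intro h0
      rw [h0, ENNReal.zero_div, zero_mul] at hn
      exact hn rfl
    have hu : uFlow a b q ν₁ k x (a n) ≠ 0 := by
      intro h0
      rw [h0, mul_zero] at hn
      exact hn rfl
    exact ((ih x (a n) hu).trans (hr n hq)).trans (by rw [hbv])

lemma rhoE_support (hr : ∀ n, q n ≠ 0 → Relation.ReflTransGen r (a n) (b n))
    (x y : V) (h : rhoE a b q ν₁ ν₂ x y ≠ 0) : Relation.ReflTransGen r x y := by
  obtain ⟨k, hk⟩ : ∃ k, ν₂ y / massAt b q y * inflow a b q ν₁ k x y ≠ 0 := by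
    by_contra hall
    push_neg at hall
    exact h (ENNReal.tsum_eq_zero.mpr hall)
  have hI : inflow a b q ν₁ k x y ≠ 0 := by
    intro h0; rw [h0, mul_zero] at hk; exact hk rfl
  obtain ⟨n, hn⟩ : ∃ n, (if b n = y then
      q n / massAt a q (a n) * uFlow a b q ν₁ k x (a n) else 0) ≠ 0 := by
    by_contra hall
    push_neg at hall
    exact hI (ENNReal.tsum_eq_zero.mpr hall)
  have hby : b n = y := by
    by_contra hb
    exact hn (if_neg hb)
  rw [if_pos hby] at hn
  have hq : q n ≠ 0 := by
    intro h0; rw [h0, ENNReal.zero_div, zero_mul] at hn; exact hn rfl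
  have hu : uFlow a b q ν₁ k x (a n) ≠ 0 := by
    intro h0; rw [h0, mul_zero] at hn; exact hn rfl
  exact ((uFlow_support hr k x (a n) hu).trans (hr n hq)).trans (by rw [hby])

end Hyp

end Chain



lemma mem_fst_of_mem_pathEdges {l : List V} {e : V × V} (h : e ∈ pathEdges l) :
    e.1 ∈ l := by
  obtain ⟨x, y⟩ := e
  exact (List.of_mem_zip h).1

lemma mem_tail_of_mem_pathEdges {l : List V} {e : V × V} (h : e ∈ pathEdges l) :
    e.2 ∈ l.tail := by
  obtain ⟨x, y⟩ := e
  exact (List.of_mem_zip h).2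

lemma pathEdges_cons_cons (v w : V) (t : List V) :
    pathEdges (v :: w :: t) = (v, w) :: pathEdges (w :: t) := rfl

lemma pathEdges_nil : pathEdges ([] : List V) = [] := rfl
lemma pathEdges_single (v : V) : pathEdges [v] = [] := rfl

noncomputable def outC (l : List V) (x : V) : ℝ≥0∞ :=
  ∑' y, if (x, y) ∈ pathEdges l then 1 else 0

noncomputable def inC (l : List V) (x : V) : ℝ≥0∞ :=
  ∑' y, if (y, x) ∈ pathEdges l then 1 else 0

noncomputable def hdI (l : List V) (x : V) : ℝ≥0∞ := if l.head? = some x then 1 else 0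
noncomputable def lstI (l : List V) (x : V) : ℝ≥0∞ := if l.getLast? = some x then 1 else 0

lemma outC_of_not_mem {l : List V} {x : V} (h : x ∉ l) : outC l x = 0 := by
  refine ENNReal.tsum_eq_zero.mpr fun y => ?_
  exact if_neg fun hmem => h (mem_fst_of_mem_pathEdges hmem)

lemma inC_of_not_mem_tail {l : List V} {x : V} (h : x ∉ l.tail) : inC l x = 0 := by
  refine ENNReal.tsum_eq_zero.mpr fun y => ?_
  exact if_neg fun hmem => h (mem_tail_of_mem_pathEdges hmem)

lemma outC_cons_cons {v w : V} {t : List V} (hv : v ∉ w :: t) (x : V) :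
    outC (v :: w :: t) x = (if v = x then 1 else 0) + outC (w :: t) x := by
  unfold outC
  have hpt : ∀ y, (if (x, y) ∈ pathEdges (v :: w :: t) then (1 : ℝ≥0∞) else 0)
      = (if (x, y) = (v, w) then 1 else 0)
        + (if (x, y) ∈ pathEdges (w :: t) then 1 else 0) := by
    intro y
    simp only [pathEdges_cons_cons, List.mem_cons]
    by_cases h1 : (x, y) = (v, w)
    · have h2 : (x, y) ∉ pathEdges (w :: t) := fun hm => by
        have := mem_fst_of_mem_pathEdges hm
        rw [h1] at this
        exact hv this
      rw [if_pos (Or.inl h1), if_pos h1, if_neg h2, add_zero]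
    · by_cases h2 : (x, y) ∈ pathEdges (w :: t)
      · rw [if_pos (Or.inr h2), if_neg h1, if_pos h2, zero_add]
      · rw [if_neg (by rintro (h | h); exacts [h1 h, h2 h]), if_neg h1, if_neg h2, add_zero]
  rw [tsum_congr hpt, ENNReal.tsum_add]
  congr 1
  by_cases hxv : x = v
  · subst hxv
    rw [if_pos rfl]
    rw [tsum_eq_single w (fun y hy => if_neg (by simp [Prod.ext_iff, hy]))]
    simp
  · rw [if_neg (fun h => hxv h.symm)]
    refine ENNReal.tsum_eq_zero.mpr fun y => if_neg (fun h => hxv ?_)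
    exact (Prod.mk.injEq _ _ _ _ ▸ h).1

lemma inC_cons_cons {v w : V} {t : List V} (hv : v ∉ w :: t) (x : V) :
    inC (v :: w :: t) x = (if w = x then 1 else 0) + inC (w :: t) x := by
  unfold inC
  have hpt : ∀ y, (if (y, x) ∈ pathEdges (v :: w :: t) then (1 : ℝ≥0∞) else 0)
      = (if (y, x) = (v, w) then 1 else 0)
        + (if (y, x) ∈ pathEdges (w :: t) then 1 else 0) := by
    intro y
    simp only [pathEdges_cons_cons, List.mem_cons]
    by_cases h1 : (y, x) = (v, w)
    · have h2 : (y, x) ∉ pathEdges (w :: t) := fun hm => by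
        have := mem_fst_of_mem_pathEdges hm
        have hyv : y = v := (Prod.mk.injEq _ _ _ _ ▸ h1).1
        rw [hyv] at this
        exact hv this
      rw [if_pos (Or.inl h1), if_pos h1, if_neg h2, add_zero]
    · by_cases h2 : (y, x) ∈ pathEdges (w :: t)
      · rw [if_pos (Or.inr h2), if_neg h1, if_pos h2, zero_add]
      · rw [if_neg (by rintro (h | h); exacts [h1 h, h2 h]), if_neg h1, if_neg h2, add_zero]
  rw [tsum_congr hpt, ENNReal.tsum_add]
  congr 1
  by_cases hxw : x = w
  · subst hxw
    rw [if_pos rfl]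
    rw [tsum_eq_single v (fun y hy => if_neg (by simp [Prod.ext_iff, hy]))]
    simp
  · rw [if_neg (fun h => hxw h.symm)]
    refine ENNReal.tsum_eq_zero.mpr fun y => if_neg (fun h => hxw ?_)
    exact (Prod.mk.injEq _ _ _ _ ▸ h).2

lemma count_balance : ∀ (l : List V), l.Nodup → ∀ x,
    outC l x + lstI l x = inC l x + hdI l x := by
  intro l
  induction l with
  | nil => intro _ x; simp [outC, inC, hdI, lstI, pathEdges_nil]
  | cons v t ih =>
    cases t with
    | nil =>
      intro _ x
      simp only [outC, inC, hdI, lstI, pathEdges_single, List.not_mem_nil, if_false,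
        tsum_zero, zero_add, List.head?_cons, List.getLast?_singleton]
      congr
    | cons w t' =>
      intro hnd x
      have hv : v ∉ w :: t' := (List.nodup_cons.mp hnd).1
      have hnd' : (w :: t').Nodup := (List.nodup_cons.mp hnd).2
      have ihh := ih hnd' x
      rw [outC_cons_cons hv, inC_cons_cons hv]
      have hlst : lstI (v :: w :: t') x = lstI (w :: t') x := by
        unfold lstI
        rw [List.getLast?_cons_cons]
      have hhd : hdI (v :: w :: t') x = (if v = x then 1 else 0) := by
        unfold hdI
        simp [List.head?_cons]
      have hhd' : hdI (w :: t') x = (if w = x then 1 else 0) := by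
        unfold hdI
        simp [List.head?_cons]
      rw [hlst, hhd]
      rw [hhd'] at ihh
      calc (if v = x then (1:ℝ≥0∞) else 0) + outC (w :: t') x + lstI (w :: t') x
          = (if v = x then (1:ℝ≥0∞) else 0) + (outC (w :: t') x + lstI (w :: t') x) := by
            rw [add_assoc]
        _ = (if v = x then (1:ℝ≥0∞) else 0) + ((if w = x then 1 else 0) + inC (w :: t') x) := by
            rw [ihh, add_comm (inC (w :: t') x) _]
        _ = (if w = x then 1 else 0) + inC (w :: t') x + (if v = x then (1:ℝ≥0∞) else 0) := by
            ring
  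
lemma outC_le_one : ∀ (l : List V), l.Nodup → ∀ x, outC l x ≤ 1 := by
  intro l
  induction l with
  | nil => intro _ x; simp [outC, pathEdges_nil]
  | cons v t ih =>
    cases t with
    | nil => intro _ x; simp [outC, pathEdges_single]
    | cons w t' =>
      intro hnd x
      have hv : v ∉ w :: t' := (List.nodup_cons.mp hnd).1
      have hnd' : (w :: t').Nodup := (List.nodup_cons.mp hnd).2
      rw [outC_cons_cons hv]
      by_cases hxv : v = x
      · have h0 : outC (w :: t') x = 0 := outC_of_not_mem (hxv ▸ hv)
        rw [h0, add_zero, if_pos hxv]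
      · rw [if_neg hxv, zero_add]
        exact ih hnd' x

lemma inC_le_one : ∀ (l : List V), l.Nodup → ∀ x, inC l x ≤ 1 := by
  intro l
  induction l with
  | nil => intro _ x; simp [inC, pathEdges_nil]
  | cons v t ih =>
    cases t with
    | nil => intro _ x; simp [inC, pathEdges_single]
    | cons w t' =>
      intro hnd x
      have hv : v ∉ w :: t' := (List.nodup_cons.mp hnd).1
      have hnd' : (w :: t').Nodup := (List.nodup_cons.mp hnd).2
      rw [inC_cons_cons hv]
      by_cases hxw : w = x
      · have hwt : x ∉ t' := by
          rw [← hxw]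
          exact (List.nodup_cons.mp hnd').1
        have h0 : inC (w :: t') x = 0 := inC_of_not_mem_tail hwt
        rw [h0, add_zero, if_pos hxw]
      · rw [if_neg hxw, zero_add]
        exact ih hnd' x

lemma chain'_pathEdges : ∀ l : List V, l.Chain' (fun u v => (u, v) ∈ pathEdges l) := by
  intro l
  induction l with
  | nil => exact List.isChain_nil
  | cons v t ih =>
    cases t with
    | nil => exact List.isChain_singleton v
    | cons w t' =>
      rw [List.Chain', List.isChain_cons_cons]
      constructor
      · rw [pathEdges_cons_cons]
        exact List.mem_cons_self ..
      · exact ih.imp fun a b h => by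
          rw [pathEdges_cons_cons]
          exact List.mem_cons_of_mem _ h

lemma chain'_reflTransGen {r : V → V → Prop} :
    ∀ (l : List V), l.Chain' r → ∀ x y, l.head? = some x → l.getLast? = some y →
      Relation.ReflTransGen r x y := by
  intro l
  induction l with
  | nil => intro _ x y hx _; exact absurd hx (by simp)
  | cons v t ih =>
    cases t with
    | nil =>
      intro _ x y hx hy
      simp only [List.head?_cons, Option.some.injEq] at hx
      simp only [List.getLast?_singleton, Option.some.injEq] at hy
      rw [← hx, ← hy]
    | cons w t' =>
      intro hc x y hx hy
      simp only [List.head?_cons, Option.some.injEq] at hx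
      rw [List.getLast?_cons_cons] at hy
      obtain ⟨hvw, hc'⟩ := List.isChain_cons_cons.mp hc
      have := ih hc' w y (by simp) hy
      rw [← hx]
      exact Relation.ReflTransGen.head hvw this


end EcoCoupling

open EcoCoupling

/-- **Economic coupling from a finitely decomposable acyclic flow, infinite case.**
Given a finitely decomposable acyclic flow `Q` on an infinite countable digraph with
`div Q = μ₁ - μ₂`, there is a coupling `ρ` of `μ₁, μ₂` moving the minimal total mass
`½ ∑ₓ |μ₁(x) - μ₂(x)|` and supported on pairs joined by a directed path in `(V, E(Q))`. -/
theorem fin_dec_flow_gives_economic_coupling {V : Type*} [Countable V] [Infinite V]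
    (E : Set (V × V)) (hloop : ∀ x : V, (x, x) ∉ E)
    (Q : V × V → ℝ) (hQ : IsFlow E Q) (hfd : FinDecomposable E Q)
    (hacyc : AcyclicRel fun a b => 0 < Q (a, b))
    (μ₁ μ₂ : V → ℝ) (h₁ : IsProb μ₁) (h₂ : IsProb μ₂)
    (hdiv : ∀ x, divergence Q x = μ₁ x - μ₂ x) :
    ∃ ρ : V × V → ℝ, IsCoupling μ₁ μ₂ ρ ∧
      (∑' p : V × V, Set.indicator {p : V × V | p.1 ≠ p.2} ρ p) =
        (1 / 2) * (∑' x, |μ₁ x - μ₂ x|) ∧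
      ∀ p : V × V, p.1 ≠ p.2 →
        ¬ Relation.TransGen (fun a b => 0 < Q (a, b)) p.1 p.2 → ρ p = 0 := by
  classical
  obtain ⟨γ, qr, hγ, hnd, hq0, hqs, hQeq⟩ := hfd
  -- endpoints of the paths
  set a : ℕ → V := fun n => (γ n).head (hγ n).1 with ha
  set b : ℕ → V := fun n => (γ n).getLast (hγ n).1 with hb
  have hhead : ∀ n, (γ n).head? = some (a n) := fun n => List.head?_eq_head _
  have hlast : ∀ n, (γ n).getLast? = some (b n) := fun n => List.getLast?_eq_getLast _
  set qe : ℕ → ℝ≥0∞ := fun n => ENNReal.ofReal (qr n) with hqedef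
  have hTe : (∑' n, qe n) ≠ ⊤ := by
    rw [show (fun n => qe n) = fun n => ENNReal.ofReal (qr n) from rfl,
      ← ENNReal.ofReal_tsum_of_nonneg hq0 hqs]
    exact ENNReal.ofReal_ne_top
  -- pathFlow facts
  have hpf_eq : ∀ (l : List V) (e : V × V),
      pathFlow l e = if e ∈ pathEdges l then 1 else 0 := by
    intro l e
    simp [pathFlow, Set.indicator_apply, Set.mem_setOf_eq]
  have hpf_nonneg : ∀ (l : List V) (e : V × V), 0 ≤ pathFlow l e := by
    intro l e; rw [hpf_eq]; split <;> norm_num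
  have hpf_le_one : ∀ (l : List V) (e : V × V), pathFlow l e ≤ 1 := by
    intro l e; rw [hpf_eq]; split <;> norm_num
  have hsume : ∀ e : V × V, Summable fun n => qr n * pathFlow (γ n) e := by
    intro e
    refine Summable.of_nonneg_of_le
      (fun n => mul_nonneg (hq0 n) (hpf_nonneg _ _)) (fun n => ?_) hqs
    exact mul_le_of_le_one_right (hq0 n) (hpf_le_one _ _)
  have hQe : ∀ e : V × V, ENNReal.ofReal (Q e)
      = ∑' n, qe n * (if e ∈ pathEdges (γ n) then 1 else 0) := by
    intro e
    rw [hQeq e, ENNReal.ofReal_tsum_of_nonneg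
      (fun n => mul_nonneg (hq0 n) (hpf_nonneg _ _)) (hsume e)]
    refine tsum_congr fun n => ?_
    rw [ENNReal.ofReal_mul (hq0 n), hpf_eq]
    congr 1
    split <;> simp
  -- out/in sums
  have hOe : ∀ x, (∑' y, ENNReal.ofReal (Q (x, y))) = ∑' n, qe n * outC (γ n) x := by
    intro x
    rw [tsum_congr (fun y => hQe (x, y)), ENNReal.tsum_comm]
    exact tsum_congr fun n => ENNReal.tsum_mul_left
  have hIe : ∀ x, (∑' y, ENNReal.ofReal (Q (y, x))) = ∑' n, qe n * inC (γ n) x := by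
    intro x
    rw [tsum_congr (fun y => hQe (y, x)), ENNReal.tsum_comm]
    exact tsum_congr fun n => ENNReal.tsum_mul_left
  -- masses at sources and sinks
  have hmassa : ∀ x, massAt a qe x = ∑' n, qe n * hdI (γ n) x := by
    intro x
    refine tsum_congr fun n => ?_
    unfold hdI
    rw [hhead n]
    by_cases h : a n = x
    · rw [if_pos h, if_pos (by rw [h]), mul_one]
    · rw [if_neg h, if_neg (by simpa using h), mul_zero]
  have hmassb : ∀ x, massAt b qe x = ∑' n, qe n * lstI (γ n) x := by
    intro x
    refine tsum_congr fun n => ?_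
    unfold lstI
    rw [hlast n]
    by_cases h : b n = x
    · rw [if_pos h, if_pos (by rw [h]), mul_one]
    · rw [if_neg h, if_neg (by simpa using h), mul_zero]
  -- the balance identity
  have hbalE : ∀ x, (∑' y, ENNReal.ofReal (Q (x, y))) + massAt b qe x
      = (∑' y, ENNReal.ofReal (Q (y, x))) + massAt a qe x := by
    intro x
    rw [hOe, hIe, hmassa, hmassb, ← ENNReal.tsum_add, ← ENNReal.tsum_add]
    refine tsum_congr fun n => ?_
    rw [← mul_add, ← mul_add, count_balance (γ n) (hnd n) x]
  -- finiteness
  have hOfin : ∀ x, (∑' y, ENNReal.ofReal (Q (x, y))) ≠ ⊤ := by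
    intro x
    refine ne_top_of_le_ne_top hTe ?_
    rw [hOe]
    refine Summable.tsum_le_tsum (fun n => ?_) ENNReal.summable ENNReal.summable
    calc qe n * outC (γ n) x ≤ qe n * 1 :=
          mul_le_mul_right (outC_le_one (γ n) (hnd n) x) _
      _ = qe n := mul_one _
  have hIfin : ∀ x, (∑' y, ENNReal.ofReal (Q (y, x))) ≠ ⊤ := by
    intro x
    refine ne_top_of_le_ne_top hTe ?_
    rw [hIe]
    refine Summable.tsum_le_tsum (fun n => ?_) ENNReal.summable ENNReal.summable
    calc qe n * inC (γ n) x ≤ qe n * 1 :=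
          mul_le_mul_right (inC_le_one (γ n) (hnd n) x) _
      _ = qe n := mul_one _
  have hmafin : ∀ x, massAt a qe x ≠ ⊤ :=
    fun x => ne_top_of_le_ne_top hTe (massAt_le_total a qe x)
  have hmbfin : ∀ x, massAt b qe x ≠ ⊤ :=
    fun x => ne_top_of_le_ne_top hTe (massAt_le_total b qe x)
  -- real divergence identity
  have hreal : ∀ x, (∑' y, Q (x, y)) = (∑' y, ENNReal.ofReal (Q (x, y))).toReal := by
    intro x
    rw [ENNReal.tsum_toReal_eq (fun y => ENNReal.ofReal_ne_top)]
    exact tsum_congr fun y => (ENNReal.toReal_ofReal (hQ.1 _)).symm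
  have hreal' : ∀ x, (∑' y, Q (y, x)) = (∑' y, ENNReal.ofReal (Q (y, x))).toReal := by
    intro x
    rw [ENNReal.tsum_toReal_eq (fun y => ENNReal.ofReal_ne_top)]
    exact tsum_congr fun y => (ENNReal.toReal_ofReal (hQ.1 _)).symm
  have hdivE : ∀ x, (massAt a qe x).toReal - (massAt b qe x).toReal = μ₁ x - μ₂ x := by
    intro x
    have h1 := congrArg ENNReal.toReal (hbalE x)
    rw [ENNReal.toReal_add (hOfin x) (hmbfin x),
      ENNReal.toReal_add (hIfin x) (hmafin x)] at h1
    have h2 := hdiv x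
    unfold divergence at h2
    rw [hreal x, hreal' x] at h2
    linarith
  -- the net measures
  set ν₁E : V → ℝ≥0∞ := fun x => ENNReal.ofReal (μ₁ x - μ₂ x) with hν₁def
  set ν₂E : V → ℝ≥0∞ := fun x => ENNReal.ofReal (μ₂ x - μ₁ x) with hν₂def
  have hbal : ∀ v, ν₁E v + massAt b qe v = ν₂E v + massAt a qe v := by
    intro v
    obtain ⟨ar, har0, hA⟩ : ∃ r, 0 ≤ r ∧ ENNReal.ofReal r = massAt a qe v :=
      ⟨_, ENNReal.toReal_nonneg, ENNReal.ofReal_toReal (hmafin v)⟩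
    obtain ⟨br, hbr0, hB⟩ : ∃ r, 0 ≤ r ∧ ENNReal.ofReal r = massAt b qe v :=
      ⟨_, ENNReal.toReal_nonneg, ENNReal.ofReal_toReal (hmbfin v)⟩
    have har' : ar = (massAt a qe v).toReal := by
      rw [← hA, ENNReal.toReal_ofReal har0]
    have hbr' : br = (massAt b qe v).toReal := by
      rw [← hB, ENNReal.toReal_ofReal hbr0]
    have hd : μ₁ v - μ₂ v = ar - br := by
      rw [har', hbr', hdivE v]
    rw [← hA, ← hB]
    show ENNReal.ofReal (μ₁ v - μ₂ v) + ENNReal.ofReal br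
        = ENNReal.ofReal (μ₂ v - μ₁ v) + ENNReal.ofReal ar
    rcases le_total br ar with h | h
    · rw [ENNReal.ofReal_eq_zero.mpr (by linarith : μ₂ v - μ₁ v ≤ 0), zero_add,
        ← ENNReal.ofReal_add (by linarith : 0 ≤ μ₁ v - μ₂ v) hbr0]
      congr 1
      linarith
    · rw [ENNReal.ofReal_eq_zero.mpr (by linarith : μ₁ v - μ₂ v ≤ 0), zero_add,
        ← ENNReal.ofReal_add (by linarith : 0 ≤ μ₂ v - μ₁ v) har0]
      congr 1
      linarith
  have hmin : ∀ v, min (ν₁E v) (ν₂E v) = 0 := by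
    intro v
    rcases le_total (μ₁ v) (μ₂ v) with h | h
    · have h0 : ν₁E v = 0 := ENNReal.ofReal_eq_zero.mpr (by linarith)
      rw [h0]
      simp
    · have h0 : ν₂E v = 0 := ENNReal.ofReal_eq_zero.mpr (by linarith)
      rw [h0]
      simp
  -- reachability along paths
  have hr : ∀ n, qe n ≠ 0 →
      Relation.ReflTransGen (fun u v => 0 < Q (u, v)) (a n) (b n) := by
    intro n hqn
    have hpos : 0 < qr n := by
      by_contra h
      exact hqn (ENNReal.ofReal_eq_zero.mpr (le_of_not_gt h))
    have hchain : (γ n).Chain' (fun u v => 0 < Q (u, v)) := by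
      refine (chain'_pathEdges (γ n)).imp fun u v hm => ?_
      have h1 : qr n * pathFlow (γ n) (u, v) ≤ Q (u, v) := by
        rw [hQeq (u, v)]
        exact Summable.le_tsum (hsume (u, v)) n
          (fun m _ => mul_nonneg (hq0 m) (hpf_nonneg _ _))
      have h2 : pathFlow (γ n) (u, v) = 1 := by
        rw [hpf_eq, if_pos hm]
      rw [h2, mul_one] at h1
      exact lt_of_lt_of_le hpos h1
    exact chain'_reflTransGen (γ n) hchain (a n) (b n) (hhead n) (hlast n)
  -- apply the chain construction
  have hrow : ∀ x, ∑' y, rhoE a b qe ν₁E ν₂E x y = ν₁E x :=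
    fun x => rhoE_row hTe hbal hmin x
  have hcol : ∀ y, ∑' x, rhoE a b qe ν₁E ν₂E x y = ν₂E y :=
    fun y => rhoE_col hTe hbal hmin y
  have hsupp : ∀ x y, rhoE a b qe ν₁E ν₂E x y ≠ 0 →
      Relation.ReflTransGen (fun u v => 0 < Q (u, v)) x y :=
    fun x y h => rhoE_support hr x y h
  have hρEfin : ∀ x y, rhoE a b qe ν₁E ν₂E x y ≠ ⊤ := by
    intro x y
    refine ne_top_of_le_ne_top ?_ (le_trans (ENNReal.le_tsum y) (hrow x).le)
    exact ENNReal.ofReal_ne_top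
  have hdiag : ∀ x, rhoE a b qe ν₁E ν₂E x x = 0 := by
    intro x
    have h1 : rhoE a b qe ν₁E ν₂E x x ≤ ν₁E x :=
      le_trans (ENNReal.le_tsum x) (hrow x).le
    have h2 : rhoE a b qe ν₁E ν₂E x x ≤ ν₂E x :=
      le_trans (ENNReal.le_tsum (f := fun x' => rhoE a b qe ν₁E ν₂E x' x) x) (hcol x).le
    exact le_antisymm ((le_min h1 h2).trans (hmin x).le) zero_le
  -- the coupling
  refine ⟨fun p => (rhoE a b qe ν₁E ν₂E p.1 p.2).toReal
      + (if p.2 = p.1 then min (μ₁ p.1) (μ₂ p.1) else 0), ⟨?_, ?_, ?_⟩, ?_, ?_⟩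
  · -- nonnegativity
    intro p
    refine add_nonneg ENNReal.toReal_nonneg ?_
    split
    · exact le_min (h₁.1 _) (h₂.1 _)
    · exact le_rfl
  · -- row marginals
    intro x
    have hs : Summable (fun y => (rhoE a b qe ν₁E ν₂E x y).toReal) :=
      ENNReal.summable_toReal (by rw [hrow x]; exact ENNReal.ofReal_ne_top)
    have h1 : HasSum (fun y => (rhoE a b qe ν₁E ν₂E x y).toReal) ((ν₁E x).toReal) := by
      have := hs.hasSum
      rwa [← ENNReal.tsum_toReal_eq (fun y => hρEfin x y), hrow x] at this
    have h2 : HasSum (fun y => if y = x then min (μ₁ x) (μ₂ x) else 0)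
        (min (μ₁ x) (μ₂ x)) := hasSum_ite_eq x _
    have h3 := h1.add h2
    have hval : (ν₁E x).toReal + min (μ₁ x) (μ₂ x) = μ₁ x := by
      rcases le_total (μ₂ x) (μ₁ x) with h | h
      · rw [hν₁def]
        show (ENNReal.ofReal (μ₁ x - μ₂ x)).toReal + min (μ₁ x) (μ₂ x) = μ₁ x
        rw [ENNReal.toReal_ofReal (by linarith), min_eq_right h]
        ring
      · rw [hν₁def]
        show (ENNReal.ofReal (μ₁ x - μ₂ x)).toReal + min (μ₁ x) (μ₂ x) = μ₁ x
        rw [ENNReal.ofReal_of_nonpos (by linarith), min_eq_left h]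
        simp
    rw [hval] at h3
    exact h3
  · -- column marginals
    intro y
    have hs : Summable (fun x => (rhoE a b qe ν₁E ν₂E x y).toReal) :=
      ENNReal.summable_toReal (by rw [hcol y]; exact ENNReal.ofReal_ne_top)
    have h1 : HasSum (fun x => (rhoE a b qe ν₁E ν₂E x y).toReal) ((ν₂E y).toReal) := by
      have := hs.hasSum
      rwa [← ENNReal.tsum_toReal_eq (fun x => hρEfin x y), hcol y] at this
    have hfe : (fun x' => if y = x' then min (μ₁ x') (μ₂ x') else 0)
        = fun x' => if x' = y then min (μ₁ y) (μ₂ y) else 0 := by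
      funext x'
      by_cases h : x' = y
      · subst h; simp
      · rw [if_neg (fun hh => h hh.symm), if_neg h]
    have h2 : HasSum (fun x' => if y = x' then min (μ₁ x') (μ₂ x') else 0)
        (min (μ₁ y) (μ₂ y)) := by
      rw [hfe]; exact hasSum_ite_eq y _
    have h3 := h1.add h2
    have hval : (ν₂E y).toReal + min (μ₁ y) (μ₂ y) = μ₂ y := by
      rcases le_total (μ₁ y) (μ₂ y) with h | h
      · rw [hν₂def]
        show (ENNReal.ofReal (μ₂ y - μ₁ y)).toReal + min (μ₁ y) (μ₂ y) = μ₂ y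
        rw [ENNReal.toReal_ofReal (by linarith), min_eq_left h]
        ring
      · rw [hν₂def]
        show (ENNReal.ofReal (μ₂ y - μ₁ y)).toReal + min (μ₁ y) (μ₂ y) = μ₂ y
        rw [ENNReal.ofReal_of_nonpos (by linarith), min_eq_right h]
        simp
    rw [hval] at h3
    exact h3
  · -- total off-diagonal mass
    have hfun : (fun p : V × V => Set.indicator {p : V × V | p.1 ≠ p.2}
        (fun p => (rhoE a b qe ν₁E ν₂E p.1 p.2).toReal
          + (if p.2 = p.1 then min (μ₁ p.1) (μ₂ p.1) else 0)) p)
        = fun p : V × V => (rhoE a b qe ν₁E ν₂E p.1 p.2).toReal := by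
      funext p
      simp only [Set.indicator_apply, Set.mem_setOf_eq]
      by_cases h : p.1 ≠ p.2
      · rw [if_pos h, if_neg (fun hh => h hh.symm), add_zero]
      · push_neg at h
        rw [if_neg (by simpa using h)]
        rw [← h, hdiag p.1]
        simp
    rw [hfun]
    -- summability facts
    have hdsum : Summable (fun x => μ₁ x - μ₂ x) := h₁.2.summable.sub h₂.2.summable
    have habs : Summable (fun x => |μ₁ x - μ₂ x|) := hdsum.abs
    have hmaxsum : Summable (fun x => max (μ₁ x - μ₂ x) 0) := by
      refine Summable.of_nonneg_of_le (fun x => le_max_right _ _) (fun x => ?_) habs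
      exact max_le (le_abs_self _) (abs_nonneg _)
    have hν₁sum : ∑' x, ν₁E x = ENNReal.ofReal (∑' x, max (μ₁ x - μ₂ x) 0) := by
      rw [ENNReal.ofReal_tsum_of_nonneg (fun x => le_max_right _ _) hmaxsum]
      refine tsum_congr fun x => ?_
      rw [hν₁def]
      show ENNReal.ofReal (μ₁ x - μ₂ x) = ENNReal.ofReal (max (μ₁ x - μ₂ x) 0)
      rcases le_total (μ₁ x - μ₂ x) 0 with h | h
      · rw [ENNReal.ofReal_of_nonpos h, max_eq_right h, ENNReal.ofReal_zero]
      · rw [max_eq_left h]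
    have htot : ∑' (p : V × V), rhoE a b qe ν₁E ν₂E p.1 p.2 = ∑' x, ν₁E x := by
      rw [ENNReal.tsum_prod]
      exact tsum_congr hrow
    have h1 : ∑' (p : V × V), (rhoE a b qe ν₁E ν₂E p.1 p.2).toReal
        = (∑' (p : V × V), rhoE a b qe ν₁E ν₂E p.1 p.2).toReal :=
      (ENNReal.tsum_toReal_eq (f := fun p : V × V => rhoE a b qe ν₁E ν₂E p.1 p.2)
        (fun p => hρEfin p.1 p.2)).symm
    rw [h1, htot, hν₁sum, ENNReal.toReal_ofReal
      (tsum_nonneg (fun x => le_max_right _ _))]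
    -- real identity
    have hd0 : ∑' x, (μ₁ x - μ₂ x) = 0 := by
      have := h₁.2.sub h₂.2
      simpa using this.tsum_eq
    have hmax : ∀ x, max (μ₁ x - μ₂ x) 0 = ((μ₁ x - μ₂ x) + |μ₁ x - μ₂ x|) / 2 := by
      intro x
      rcases le_total 0 (μ₁ x - μ₂ x) with h | h
      · rw [max_eq_left h, abs_of_nonneg h]; ring
      · rw [max_eq_right h, abs_of_nonpos h]; ring
    calc ∑' x, max (μ₁ x - μ₂ x) 0
        = ∑' x, ((μ₁ x - μ₂ x) + |μ₁ x - μ₂ x|) / 2 := tsum_congr hmax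
      _ = (∑' x, ((μ₁ x - μ₂ x) + |μ₁ x - μ₂ x|)) / 2 := by
          rw [tsum_div_const]
      _ = (∑' x, (μ₁ x - μ₂ x) + ∑' x, |μ₁ x - μ₂ x|) / 2 := by
          rw [Summable.tsum_add hdsum habs]
      _ = 1 / 2 * (∑' x, |μ₁ x - μ₂ x|) := by rw [hd0]; ring
  · -- support
    intro p hne hnt
    have h1 : rhoE a b qe ν₁E ν₂E p.1 p.2 = 0 := by
      by_contra h
      rcases Relation.reflTransGen_iff_eq_or_transGen.mp (hsupp p.1 p.2 h) with he | ht
      · exact hne he.symm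
      · exact hnt ht
    show (rhoE a b qe ν₁E ν₂E p.1 p.2).toReal
        + (if p.2 = p.1 then min (μ₁ p.1) (μ₂ p.1) else 0) = 0
    rw [h1, if_neg (fun hh => hne hh.symm)]
    simp
end

section
/- Let (V,E) be a finite digraph such that the associated undirected graph (V,𝓔_E) is a tree, and let ≤ be the partial order induced by (V,E) (assumed acyclic). For an edge {x,y} ∈ 𝓔_E with x ≤ y, removing it splits the tree into two connected components T₋^{x,y} (containing x) and T₊^{x,y} (containing y). Then for probability measures μ₁, μ₂ on V the equation div Q = μ₁ − μ₂ has the unique real-valued solution Q(x,y) = ∑_{z ∈ T₋^{x,y}} (μ₁(z) − μ₂(z)), and μ₁ ⪯ μ₂ if and only if ∑_{z ∈ T₋^{e}} (μ₁(z) − μ₂(z)) ≥ 0 for every edge e ∈ 𝓔_E. -/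
open scoped BigOperators

variable {V : Type*}

/-- The undirected graph associated to a digraph. -/
def symGraph {V : Type*} (E : Set (V × V)) : SimpleGraph V where
  Adj a b := a ≠ b ∧ ((a, b) ∈ E ∨ (b, a) ∈ E)
  symm := by
    constructor
    intro a b h
    exact ⟨Ne.symm h.1, h.2.symm⟩
  loopless := by
    constructor
    intro a h
    exact h.1 rfl

/-- The connected component of `e.1` after removing the undirected edge `{e.1, e.2}`. -/
def Tminus {V : Type*} (E : Set (V × V)) (e : V × V) : Set V :=
  {z | ((symGraph E).deleteEdges {s(e.1, e.2)}).Reachable e.1 z}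

/-- The candidate solution on a tree: the net mass of `μ₁ - μ₂` in the component below
the edge. -/
noncomputable def treeSol {V : Type*} [Fintype V] (E : Set (V × V)) (μ₁ μ₂ : V → ℝ)
    (e : V × V) : ℝ :=
  ∑ z, Set.indicator (Tminus E e) (fun z => μ₁ z - μ₂ z) z


section helpers
variable {V : Type*} {E : Set (V × V)}

lemma mem_Tminus {a b z : V} :
    z ∈ Tminus E (a, b) ↔ ((symGraph E).deleteEdges {s(a, b)}).Reachable a z := Iff.rfl

lemma adj_of_memE (hloop : ∀ x : V, (x, x) ∉ E) {a b : V} (h : (a, b) ∈ E) :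
    (symGraph E).Adj a b :=
  ⟨fun hab => hloop a (by rw [hab] at h ⊢; exact h), Or.inl h⟩

lemma no_two_cycle (hacyc : AcyclicRel (edgeRel E)) {a b : V} (h : (a, b) ∈ E) :
    (b, a) ∉ E := fun h' =>
  hacyc a (Relation.TransGen.head h (Relation.TransGen.single h'))

lemma bridge_not_reach (htree : (symGraph E).IsTree) {a b : V} (h : (symGraph E).Adj a b) :
    ¬ ((symGraph E).deleteEdges {s(a, b)}).Reachable a b := by
  have := (SimpleGraph.isAcyclic_iff_forall_adj_isBridge.mp htree.2 h)
  exact this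

lemma self_mem_Tminus (a b : V) : a ∈ Tminus E (a, b) := SimpleGraph.Reachable.refl _

lemma snd_not_mem_Tminus (htree : (symGraph E).IsTree) {a b : V}
    (h : (symGraph E).Adj a b) : b ∉ Tminus E (a, b) :=
  bridge_not_reach htree h

lemma delete_swap (a b : V) :
    (symGraph E).deleteEdges {s(b, a)} = (symGraph E).deleteEdges {s(a, b)} := by
  rw [Sym2.eq_swap]

lemma cut_lemma (htree : (symGraph E).IsTree) {a b u v : V}
    (hab : (symGraph E).Adj a b) (hu : u ∈ Tminus E (a, b)) (hv : v ∉ Tminus E (a, b))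
    (huv : (symGraph E).Adj u v) : s(u, v) = s(a, b) := by
  by_contra hne
  refine hv (hu.trans (SimpleGraph.Adj.reachable ?_))
  simp only [SimpleGraph.deleteEdges_adj, Set.mem_singleton_iff]
  exact ⟨huv, hne⟩

lemma Tminus_disjoint (htree : (symGraph E).IsTree) {x y z : V}
    (h : (symGraph E).Adj x y) (h1 : z ∈ Tminus E (x, y)) : z ∉ Tminus E (y, x) := by
  intro h2
  rw [mem_Tminus] at h1
  rw [mem_Tminus, delete_swap x y] at h2
  exact bridge_not_reach htree h (h1.trans h2.symm)

lemma Tminus_cover (htree : (symGraph E).IsTree) {x y : V}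
    (h : (symGraph E).Adj x y) (z : V) : z ∈ Tminus E (x, y) ∨ z ∈ Tminus E (y, x) := by
  have hreach : (symGraph E).Reachable x z := htree.1.preconnected x z
  obtain ⟨w⟩ := hreach
  have main : ∀ (u v : V) (_ : (symGraph E).Walk u v),
      u ∈ Tminus E (x, y) ∨ u ∈ Tminus E (y, x) →
      v ∈ Tminus E (x, y) ∨ v ∈ Tminus E (y, x) := by
    intro u v w
    induction w with
    | nil => exact fun h => h
    | @cons u u' v hadj w ih =>
      intro hu
      refine ih ?_
      by_cases he : s(u, u') = s(x, y)
      · rw [Sym2.eq_iff] at he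
        rcases he with ⟨rfl, rfl⟩ | ⟨rfl, rfl⟩
        · exact Or.inr (self_mem_Tminus _ _)
        · exact Or.inl (self_mem_Tminus _ _)
      · have hadj' : ((symGraph E).deleteEdges {s(x, y)}).Adj u u' := by
          simp only [SimpleGraph.deleteEdges_adj, Set.mem_singleton_iff]
          exact ⟨hadj, he⟩
        rcases hu with hu | hu
        · exact Or.inl (hu.trans hadj'.reachable)
        · rw [mem_Tminus, delete_swap x y] at hu
          refine Or.inr ?_
          rw [mem_Tminus, delete_swap x y]
          exact hu.trans hadj'.reachable
  exact main x z w (Or.inl (self_mem_Tminus _ _))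

lemma Tminus_mem_iff (htree : (symGraph E).IsTree) {x y z : V}
    (h : (symGraph E).Adj x y) : z ∈ Tminus E (x, y) ↔ z ∉ Tminus E (y, x) := by
  constructor
  · exact Tminus_disjoint htree h
  · intro hz
    rcases Tminus_cover htree h z with h1 | h1
    · exact h1
    · exact absurd h1 hz
end helpers

section helpers2
variable {V : Type*} {E : Set (V × V)}

lemma x_not_mem_Tminus (htree : (symGraph E).IsTree) {x y : V}
    (h : (symGraph E).Adj x y) : x ∉ Tminus E (y, x) := by
  rw [mem_Tminus, delete_swap x y]
  intro hr
  exact bridge_not_reach htree h hr.symm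

lemma down_closed (hloop : ∀ x : V, (x, x) ∉ E) (hacyc : AcyclicRel (edgeRel E))
    (htree : (symGraph E).IsTree) {a b u v : V} (hab : (a, b) ∈ E)
    (huv : (u, v) ∈ E) (hv : v ∈ Tminus E (a, b)) : u ∈ Tminus E (a, b) := by
  by_cases hu : u ∈ Tminus E (a, b)
  · exact hu
  have hadj : (symGraph E).Adj u v := adj_of_memE hloop huv
  have hcut := cut_lemma htree (adj_of_memE hloop hab) hv hu hadj.symm
  rw [Sym2.eq_iff] at hcut
  rcases hcut with ⟨rfl, rfl⟩ | ⟨rfl, rfl⟩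
  · exact absurd hab (no_two_cycle hacyc huv)
  · exact self_mem_Tminus _ _

lemma unique_snd (htree : (symGraph E).IsTree) {x z : V} (hz : z ≠ x) :
    ∃! y, (symGraph E).Adj x y ∧ z ∈ Tminus E (y, x) := by
  classical
  -- uniqueness helper
  have uniq : ∀ y, (symGraph E).Adj x y → z ∈ Tminus E (y, x) →
      ∃ (r : (symGraph E).Walk x z), r.IsPath ∧ r.getVert 1 = y := by
    intro y hy hmem
    rw [mem_Tminus] at hmem
    obtain ⟨w⟩ := hmem
    set p := w.toPath with hp
    have hxp : x ∉ (p.1 : ((symGraph E).deleteEdges {s(y, x)}).Walk y z).support := by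
      intro hxs
      have hr1 : ((symGraph E).deleteEdges {s(y, x)}).Reachable x z :=
        ⟨p.1.dropUntil x hxs⟩
      have hr2 : ((symGraph E).deleteEdges {s(y, x)}).Reachable y z := ⟨p.1⟩
      have : ((symGraph E).deleteEdges {s(y, x)}).Reachable x y := hr1.trans hr2.symm
      rw [delete_swap x y] at this
      exact bridge_not_reach htree hy this
    have hsub : ∀ e ∈ (p.1 : ((symGraph E).deleteEdges {s(y, x)}).Walk y z).edges,
        e ∈ (symGraph E).edgeSet := fun e he =>
      (SimpleGraph.edgeSet_mono (SimpleGraph.deleteEdges_le _)) 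
        (p.1.edges_subset_edgeSet he)
    refine ⟨SimpleGraph.Walk.cons hy (p.1.transfer _ hsub), ?_, ?_⟩
    · rw [SimpleGraph.Walk.cons_isPath_iff]
      exact ⟨p.2.transfer hsub, by rwa [SimpleGraph.Walk.support_transfer]⟩
    · simp [SimpleGraph.Walk.getVert_cons_succ]
  -- existence
  have hreach : (symGraph E).Reachable x z := htree.1.preconnected x z
  obtain ⟨w⟩ := hreach
  set p := w.toPath with hp
  obtain ⟨y₀, hadj, q, hq⟩ := SimpleGraph.Walk.exists_eq_cons_of_ne (Ne.symm hz) p.1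
  have hpath : (p.1 : (symGraph E).Walk x z).IsPath := p.2
  rw [hq, SimpleGraph.Walk.cons_isPath_iff] at hpath
  have hqedge : ∀ e ∈ q.edges, e ∉ ({s(y₀, x)} : Set (Sym2 V)) := by
    intro e he
    simp only [Set.mem_singleton_iff]
    rintro rfl
    exact hpath.2 (SimpleGraph.Walk.snd_mem_support_of_mem_edges q he)
  have hmem0 : z ∈ Tminus E (y₀, x) := ⟨q.toDeleteEdges _ hqedge⟩
  refine ⟨y₀, ⟨hadj, hmem0⟩, ?_⟩
  intro y ⟨hy, hmy⟩
  obtain ⟨r1, hr1, hv1⟩ := uniq y hy hmy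
  obtain ⟨r0, hr0, hv0⟩ := uniq y₀ hadj hmem0
  have := htree.2.path_unique ⟨r1, hr1⟩ ⟨r0, hr0⟩
  rw [Subtype.ext_iff] at this
  simp only at this
  rw [← hv1, this, hv0]

end helpers2

section part1
variable {V : Type*} [Fintype V] {E : Set (V × V)}

lemma part1 (hloop : ∀ x : V, (x, x) ∉ E) (hacyc : AcyclicRel (edgeRel E))
    (htree : (symGraph E).IsTree) (μ₁ μ₂ : V → ℝ) (h₁ : IsProbF μ₁) (h₂ : IsProbF μ₂) :
    ∀ x, divergenceF (E.indicator (treeSol E μ₁ μ₂)) x = μ₁ x - μ₂ x := by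
  classical
  intro x
  set ν : V → ℝ := fun z => μ₁ z - μ₂ z with hνdef
  have hνsum : ∑ z, ν z = 0 := by
    simp [hνdef, Finset.sum_sub_distrib, h₁.2, h₂.2]
  set S : V → V → ℝ := fun a b => ∑ z, if z ∈ Tminus E (a, b) then ν z else 0 with hS
  have htS : ∀ a b : V, treeSol E μ₁ μ₂ (a, b) = S a b := by
    intro a b
    unfold treeSol
    apply Finset.sum_congr rfl
    intro z _
    rw [Set.indicator_apply]
  have hSpair : ∀ a b : V, (symGraph E).Adj a b → S a b + S b a = 0 := by
    intro a b hab
    rw [hS]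
    simp only
    rw [← Finset.sum_add_distrib]
    have hpt : ∀ z ∈ Finset.univ, ((if z ∈ Tminus E (a, b) then ν z else 0)
        + (if z ∈ Tminus E (b, a) then ν z else 0)) = ν z := by
      intro z _
      by_cases hmem : z ∈ Tminus E (a, b)
      · rw [if_pos hmem, if_neg (Tminus_disjoint htree hab hmem), add_zero]
      · rw [if_neg hmem, zero_add, if_pos]
        rcases Tminus_cover htree hab z with h | h
        · exact absurd h hmem
        · exact h
    rw [Finset.sum_congr rfl hpt, hνsum]
  have hQ : divergenceF (E.indicator (treeSol E μ₁ μ₂)) x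
      = ∑ y, (if (symGraph E).Adj x y then S x y else 0) := by
    unfold divergenceF
    rw [← Finset.sum_sub_distrib]
    apply Finset.sum_congr rfl
    intro y _
    rw [Set.indicator_apply, Set.indicator_apply]
    by_cases h1 : (x, y) ∈ E
    · have hadj := adj_of_memE hloop h1
      rw [if_pos h1, if_neg (no_two_cycle hacyc h1), if_pos hadj, htS, sub_zero]
    by_cases h2 : (y, x) ∈ E
    · have hadj := (adj_of_memE hloop h2).symm
      rw [if_neg h1, if_pos h2, if_pos hadj, htS]
      have := hSpair x y hadj
      linarith
    · rw [if_neg h1, if_neg h2, if_neg, sub_zero]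
      rintro ⟨hne, h | h⟩
      · exact h1 h
      · exact h2 h
  rw [hQ]
  have hswap : ∑ y, (if (symGraph E).Adj x y then S x y else 0)
      = ∑ z, ∑ y, (if (symGraph E).Adj x y ∧ z ∈ Tminus E (x, y) then ν z else 0) := by
    rw [Finset.sum_comm]
    apply Finset.sum_congr rfl
    intro y _
    by_cases hadj : (symGraph E).Adj x y
    · rw [if_pos hadj, hS]
      simp only
      apply Finset.sum_congr rfl
      intro z _
      simp [hadj]
    · simp [hadj]
  rw [hswap]
  set D : ℝ := ∑ y, (if (symGraph E).Adj x y then (1 : ℝ) else 0) with hD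
  have hinner : ∀ z, ∑ y, (if (symGraph E).Adj x y ∧ z ∈ Tminus E (x, y) then ν z else 0)
      = ν z * D - (if z = x then 0 else ν z) := by
    intro z
    have step1 : ∑ y, (if (symGraph E).Adj x y ∧ z ∈ Tminus E (x, y) then ν z else 0)
        = ∑ y, ((if (symGraph E).Adj x y then ν z else 0)
          - (if (symGraph E).Adj x y ∧ z ∈ Tminus E (y, x) then ν z else 0)) := by
      apply Finset.sum_congr rfl
      intro y _
      by_cases hadj : (symGraph E).Adj x y
      · by_cases hmem : z ∈ Tminus E (x, y)
        · rw [if_pos ⟨hadj, hmem⟩, if_pos hadj,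
            if_neg (fun h => Tminus_disjoint htree hadj hmem h.2), sub_zero]
        · rw [if_neg (fun h => hmem h.2), if_pos hadj, if_pos]
          · ring
          · refine ⟨hadj, ?_⟩
            rcases Tminus_cover htree hadj z with h | h
            · exact absurd h hmem
            · exact h
      · simp [hadj]
    rw [step1, Finset.sum_sub_distrib]
    congr 1
    · rw [hD, Finset.mul_sum]
      apply Finset.sum_congr rfl
      intro y _
      rw [mul_ite, mul_one, mul_zero]
    · by_cases hzx : z = x
      · subst hzx
        rw [if_pos rfl]
        apply Finset.sum_eq_zero
        intro y _
        rw [if_neg]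
        rintro ⟨hy, hm⟩
        exact x_not_mem_Tminus htree hy hm
      · obtain ⟨y₀, hy₀, huniq⟩ := unique_snd htree hzx
        rw [if_neg hzx]
        have hiff : ∀ y, ((symGraph E).Adj x y ∧ z ∈ Tminus E (y, x)) ↔ y = y₀ :=
          fun y => ⟨fun h => huniq y h, fun h => h ▸ hy₀⟩
        simp only [hiff]
        simp
  simp only [hinner]
  rw [Finset.sum_sub_distrib, ← Finset.sum_mul, hνsum, zero_mul]
  have : ∑ z, (if z = x then 0 else ν z) = (∑ z, ν z) - ν x := by
    have hpt : ∀ z, (if z = x then (0:ℝ) else ν z) = ν z - (if z = x then ν z else 0) := by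
      intro z
      by_cases hzx : z = x <;> simp [hzx]
    simp only [hpt]
    rw [Finset.sum_sub_distrib]
    congr 1
    simp
  rw [this, hνsum]
  ring

end part1

section part2
variable {V : Type*} [Fintype V] {E : Set (V × V)}

lemma part2 (hloop : ∀ x : V, (x, x) ∉ E) (hacyc : AcyclicRel (edgeRel E))
    (htree : (symGraph E).IsTree) (μ₁ μ₂ : V → ℝ)
    (Q : V × V → ℝ) (hsupp : ∀ e ∉ E, Q e = 0)
    (hdiv : ∀ x, divergenceF Q x = μ₁ x - μ₂ x) :
    ∀ e ∈ E, Q e = treeSol E μ₁ μ₂ e := by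
  classical
  rintro ⟨a, b⟩ he
  have hab : (symGraph E).Adj a b := adj_of_memE hloop he
  set T : Finset V := Finset.univ.filter (· ∈ Tminus E (a, b)) with hT
  have hmemT : ∀ z, z ∈ T ↔ z ∈ Tminus E (a, b) := by
    intro z; simp [hT]
  have haT : a ∈ T := (hmemT a).2 (self_mem_Tminus a b)
  have hbT : b ∉ T := fun h => snd_not_mem_Tminus htree hab ((hmemT b).1 h)
  -- the cut computation
  have hkey : ∑ z ∈ T, divergenceF Q z = Q (a, b) := by
    unfold divergenceF
    rw [Finset.sum_sub_distrib]
    have hout : ∀ z, (∑ y, Q (z, y)) = (∑ y ∈ T, Q (z, y)) + ∑ y ∈ Tᶜ, Q (z, y) :=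
      fun z => (Finset.sum_add_sum_compl T _).symm
    have hin : ∀ z, (∑ y, Q (y, z)) = (∑ y ∈ T, Q (y, z)) + ∑ y ∈ Tᶜ, Q (y, z) :=
      fun z => (Finset.sum_add_sum_compl T _).symm
    simp only [hout, hin, Finset.sum_add_distrib]
    have hA : ∑ z ∈ T, ∑ y ∈ T, Q (z, y) = ∑ z ∈ T, ∑ y ∈ T, Q (y, z) :=
      Finset.sum_comm
    have hB : ∑ z ∈ T, ∑ y ∈ Tᶜ, Q (z, y) = Q (a, b) := by
      rw [Finset.sum_eq_single_of_mem a haT]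
      · rw [Finset.sum_eq_single_of_mem b (Finset.mem_compl.2 hbT)]
        intro y hy hyb
        by_contra hQ
        have hmem : (a, y) ∈ E := by
          by_contra h; exact hQ (hsupp _ h)
        have hcut := cut_lemma htree hab ((hmemT a).1 haT)
          (fun h => (Finset.mem_compl.1 hy) ((hmemT y).2 h)) (adj_of_memE hloop hmem)
        rw [Sym2.eq_iff] at hcut
        rcases hcut with ⟨-, rfl⟩ | ⟨rfl, rfl⟩
        · exact hyb rfl
        · exact hab.ne rfl
      · intro z hz hza
        apply Finset.sum_eq_zero
        intro y hy
        by_contra hQ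
        have hmem : (z, y) ∈ E := by
          by_contra h; exact hQ (hsupp _ h)
        have hcut := cut_lemma htree hab ((hmemT z).1 hz)
          (fun h => (Finset.mem_compl.1 hy) ((hmemT y).2 h)) (adj_of_memE hloop hmem)
        rw [Sym2.eq_iff] at hcut
        rcases hcut with ⟨rfl, rfl⟩ | ⟨rfl, rfl⟩
        · exact hza rfl
        · exact hbT hz
    have hC : ∑ z ∈ T, ∑ y ∈ Tᶜ, Q (y, z) = 0 := by
      apply Finset.sum_eq_zero
      intro z hz
      apply Finset.sum_eq_zero
      intro y hy
      by_contra hQ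
      have hmem : (y, z) ∈ E := by
        by_contra h; exact hQ (hsupp _ h)
      have hcut := cut_lemma htree hab ((hmemT z).1 hz)
        (fun h => (Finset.mem_compl.1 hy) ((hmemT y).2 h)) ((adj_of_memE hloop hmem).symm)
      rw [Sym2.eq_iff] at hcut
      rcases hcut with ⟨rfl, rfl⟩ | ⟨rfl, rfl⟩
      · exact no_two_cycle hacyc he hmem
      · exact hbT hz
    rw [hA, hB, hC]
    ring
  have hrhs : ∑ z ∈ T, divergenceF Q z = treeSol E μ₁ μ₂ (a, b) := by
    rw [Finset.sum_congr rfl (fun z _ => hdiv z)]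
    unfold treeSol
    rw [hT, Finset.sum_filter]
    apply Finset.sum_congr rfl
    intro z _
    rw [Set.indicator_apply]
  rw [← hkey, hrhs]

end part2

section part3
variable {V : Type*} [Fintype V] {E : Set (V × V)}

lemma part3 (hloop : ∀ x : V, (x, x) ∉ E) (hacyc : AcyclicRel (edgeRel E))
    (htree : (symGraph E).IsTree) (μ₁ μ₂ : V → ℝ) (h₁ : IsProbF μ₁) (h₂ : IsProbF μ₂) :
    StochDomF (inducedLE E) μ₁ μ₂ ↔ ∀ e ∈ E, 0 ≤ treeSol E μ₁ μ₂ e := by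
  classical
  constructor
  · rintro hdom ⟨a, b⟩ he
    set f : V → ℝ := fun z => if z ∈ Tminus E (a, b) then 0 else 1 with hf
    have hdown : ∀ u v : V, inducedLE E u v → v ∈ Tminus E (a, b) → u ∈ Tminus E (a, b) := by
      intro u v hle
      induction hle using Relation.ReflTransGen.head_induction_on with
      | refl => exact id
      | head hr _ ih => exact fun hv => down_closed hloop hacyc htree he hr (ih hv)
    have hmono : ∀ u v, inducedLE E u v → f u ≤ f v := by
      intro u v hle
      by_cases hv : v ∈ Tminus E (a, b)
      · rw [hf]; simp only
        rw [if_pos hv, if_pos (hdown u v hle hv)]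
      · rw [hf]; simp only
        rw [if_neg hv]
        split <;> norm_num
    have hineq := hdom f hmono
    have hcomp : ∀ μ : V → ℝ, (∑ x, μ x = 1) →
        ∑ x, f x * μ x = 1 - ∑ x, (if x ∈ Tminus E (a, b) then μ x else 0) := by
      intro μ hμ
      have hpt : ∀ x, f x * μ x = μ x - (if x ∈ Tminus E (a, b) then μ x else 0) := by
        intro x
        rw [hf]; simp only
        by_cases hx : x ∈ Tminus E (a, b) <;> simp [hx]
      simp only [hpt]
      rw [Finset.sum_sub_distrib, hμ]
    rw [hcomp μ₁ h₁.2, hcomp μ₂ h₂.2] at hineq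
    have : ∑ x, (if x ∈ Tminus E (a, b) then μ₂ x else 0)
        ≤ ∑ x, (if x ∈ Tminus E (a, b) then μ₁ x else 0) := by linarith
    unfold treeSol
    have hexp : ∀ z, Set.indicator (Tminus E (a, b)) (fun z => μ₁ z - μ₂ z) z
        = (if z ∈ Tminus E (a, b) then μ₁ z else 0)
          - (if z ∈ Tminus E (a, b) then μ₂ z else 0) := by
      intro z
      rw [Set.indicator_apply]
      by_cases hz : z ∈ Tminus E (a, b) <;> simp [hz]
    simp only [hexp]
    rw [Finset.sum_sub_distrib]
    linarith
  · intro hpos f hmono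
    set Q₀ : V × V → ℝ := E.indicator (treeSol E μ₁ μ₂) with hQ₀
    have hdiv := part1 hloop hacyc htree μ₁ μ₂ h₁ h₂
    rw [← sub_nonneg, ← Finset.sum_sub_distrib]
    have hmain : ∑ x, (f x * μ₂ x - f x * μ₁ x)
        = ∑ x, ∑ y, (f y - f x) * Q₀ (x, y) := by
      calc ∑ x, (f x * μ₂ x - f x * μ₁ x)
          = ∑ x, ((∑ y, f x * Q₀ (y, x)) - ∑ y, f x * Q₀ (x, y)) := by
            apply Finset.sum_congr rfl
            intro x _
            have h' : μ₂ x - μ₁ x = (∑ y, Q₀ (y, x)) - ∑ y, Q₀ (x, y) := by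
              have := hdiv x
              unfold divergenceF at this
              linarith
            calc f x * μ₂ x - f x * μ₁ x = f x * (μ₂ x - μ₁ x) := by ring
              _ = f x * ((∑ y, Q₀ (y, x)) - ∑ y, Q₀ (x, y)) := by rw [h']
              _ = (∑ y, f x * Q₀ (y, x)) - ∑ y, f x * Q₀ (x, y) := by
                  rw [mul_sub, Finset.mul_sum, Finset.mul_sum]
        _ = (∑ x, ∑ y, f x * Q₀ (y, x)) - ∑ x, ∑ y, f x * Q₀ (x, y) :=
            Finset.sum_sub_distrib _ _
        _ = (∑ x, ∑ y, f y * Q₀ (x, y)) - ∑ x, ∑ y, f x * Q₀ (x, y) := by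
            rw [Finset.sum_comm]
        _ = ∑ x, ∑ y, (f y - f x) * Q₀ (x, y) := by
            rw [← Finset.sum_sub_distrib]
            apply Finset.sum_congr rfl
            intro x _
            rw [← Finset.sum_sub_distrib]
            apply Finset.sum_congr rfl
            intro y _
            ring
    rw [hmain]
    apply Finset.sum_nonneg
    intro x _
    apply Finset.sum_nonneg
    intro y _
    by_cases hxy : (x, y) ∈ E
    · have h0 : 0 ≤ Q₀ (x, y) := by
        rw [hQ₀, Set.indicator_apply, if_pos hxy]
        exact hpos _ hxy
      have hfle : f x ≤ f y := hmono x y (Relation.ReflTransGen.single hxy)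
      exact mul_nonneg (by linarith) h0
    · rw [hQ₀, Set.indicator_apply, if_neg hxy, mul_zero]
end part3

/-- **Finite trees.** If the undirected graph of an acyclic digraph `(V, E)` is a tree,
the equation `div Q = μ₁ - μ₂` has the unique real-valued solution
`Q(x,y) = ∑_{z ∈ T₋^{x,y}} (μ₁(z) - μ₂(z))`, and `μ₁ ⪯ μ₂` iff all these values are
nonnegative. -/
theorem tree_case {V : Type*} [Fintype V]
    (E : Set (V × V)) (hloop : ∀ x : V, (x, x) ∉ E)
    (hacyc : AcyclicRel (edgeRel E)) (htree : (symGraph E).IsTree)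
    (μ₁ μ₂ : V → ℝ) (h₁ : IsProbF μ₁) (h₂ : IsProbF μ₂) :
    (∀ x, divergenceF (E.indicator (treeSol E μ₁ μ₂)) x = μ₁ x - μ₂ x) ∧
    (∀ Q : V × V → ℝ, (∀ e ∉ E, Q e = 0) → (∀ x, divergenceF Q x = μ₁ x - μ₂ x) →
      ∀ e ∈ E, Q e = treeSol E μ₁ μ₂ e) ∧
    (StochDomF (inducedLE E) μ₁ μ₂ ↔ ∀ e ∈ E, 0 ≤ treeSol E μ₁ μ₂ e) := by
  exact ⟨part1 hloop hacyc htree μ₁ μ₂ h₁ h₂,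
    fun Q hs hd => part2 hloop hacyc htree μ₁ μ₂ Q hs hd,
    part3 hloop hacyc htree μ₁ μ₂ h₁ h₂⟩
end

section
/- Let V = {0,1}^N with the partial order η ≤ ξ iff η(i) ≤ ξ(i) for all i, and for η, ξ ∈ V let (η∨ξ)(i) = max{η(i),ξ(i)} and (η∧ξ)(i) = min{η(i),ξ(i)}. Let μ₁, μ₂ be probability measures on V and suppose there exist strictly positive (not necessarily normalized) measures m₁, m₂ on V satisfying the Holley condition m₂(η∨ξ) m₁(η∧ξ) ≥ m₂(η) m₁(ξ) for all η, ξ ∈ V and such that m₁ − m₂ = μ₁ − μ₂ pointwise. Then μ₁ ⪯ μ₂. -/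
open scoped BigOperators

variable {V : Type*}

/-- **A generalization of Holley's inequality.** If there are strictly positive measures
`m₁, m₂` on `{0,1}^N` satisfying the Holley condition and with `m₁ - m₂ = μ₁ - μ₂`,
then `μ₁ ⪯ μ₂`. -/
theorem generalized_holley (N : ℕ) (μ₁ μ₂ : (Fin N → Bool) → ℝ)
    (h₁ : IsProbF μ₁) (h₂ : IsProbF μ₂)
    (m₁ m₂ : (Fin N → Bool) → ℝ)
    (hm₁ : ∀ η, 0 < m₁ η) (hm₂ : ∀ η, 0 < m₂ η)
    (hholley : ∀ η ξ, m₂ η * m₁ ξ ≤ m₂ (η ⊔ ξ) * m₁ (η ⊓ ξ))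
    (hdiff : ∀ η, m₁ η - m₂ η = μ₁ η - μ₂ η) :
    ∀ f : (Fin N → Bool) → ℝ, Monotone f →
      ∑ η, f η * μ₁ η ≤ ∑ η, f η * μ₂ η := by
  intro f hf
  classical
  -- the test function shifted to be nonnegative
  have hsum : ∑ η, m₁ η = ∑ η, m₂ η := by
    have : ∑ η, (m₁ η - m₂ η) = ∑ η, (μ₁ η - μ₂ η) := by
      exact Finset.sum_congr rfl fun η _ => hdiff η
    simp only [Finset.sum_sub_distrib, h₁.2, h₂.2] at this
    linarith
  obtain ⟨C, hC⟩ : ∃ C, ∀ η, 0 ≤ f η + C := by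
    refine ⟨∑ η, |f η|, fun η => ?_⟩
    have h1 : |f η| ≤ ∑ x, |f x| :=
      Finset.single_le_sum (f := fun x => |f x|) (fun x _ => abs_nonneg _)
        (Finset.mem_univ η)
    have := neg_abs_le (f η)
    linarith
  set g : (Fin N → Bool) → ℝ := fun η => f η + C with hg
  have hgmono : Monotone g := fun a b hab => by
    simpa [hg] using hf hab
  have key : ∑ η, g η * m₁ η ≤ ∑ η, g η * m₂ η := by
    have := holley (μ := g) (f := m₁) (g := m₂)
      (fun η => hC η) (fun η => (hm₁ η).le) (fun η => (hm₂ η).le) hgmono hsum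
      (fun a b => by
        have := hholley b a
        rw [sup_comm, inf_comm] at this
        linarith [this])
    simpa [mul_comm] using this
  have hdiff2 : ∀ η, g η * μ₁ η - g η * μ₂ η = g η * m₁ η - g η * m₂ η := by
    intro η
    rw [← mul_sub, ← mul_sub, ← hdiff η]
  have key2 : ∑ η, g η * μ₁ η ≤ ∑ η, g η * μ₂ η := by
    have e : ∑ η, (g η * μ₁ η - g η * μ₂ η) = ∑ η, (g η * m₁ η - g η * m₂ η) :=
      Finset.sum_congr rfl fun η _ => hdiff2 η
    simp only [Finset.sum_sub_distrib] at e
    linarith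
  -- remove the constant C using that both μ's sum to 1
  have e1 : ∑ η, g η * μ₁ η = (∑ η, f η * μ₁ η) + C := by
    simp only [hg, add_mul, Finset.sum_add_distrib, ← Finset.mul_sum, h₁.2, mul_one]
  have e2 : ∑ η, g η * μ₂ η = (∑ η, f η * μ₂ η) + C := by
    simp only [hg, add_mul, Finset.sum_add_distrib, ← Finset.mul_sum, h₂.2, mul_one]
  linarith [key2, e1.symm, e2.symm]
end
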